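/- arXiv:1705.08203 — 3 statements merged into one kernel-verified Lean document; each statement's English description precedes it below -/
import Mathlib

section
/- (Cylindrical Equivalence.) Let n ≥ 2, 2 ≤ p ≤ ∞, 1 ≤ k ≤ n, and let u(x) = U(|Qᵀ(x−x₀)|) be a k-cylindrical C² function, where U is C², Q is an n×k real matrix with QᵀQ = I_k and x₀ ∈ ℝⁿ. Assume U′(r)/r ≤ U″(r) for all relevant r > 0, and additionally U″ ≥ 0 if k < n. Then at every point x with Qᵀ(x−x₀) ≠ 0: Δ_p u(x) = |∇u(x)|^{p−2}·D_p u(x) when 2 ≤ p < ∞ (the right-hand side interpreted as 0 when ∇u(x) = 0 and p > 2), and Δ_∞ u(x) = |∇u(x)|²·D_∞ u(x) when p = ∞. -/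
open scoped ENNReal
open Filter Matrix

noncomputable section

/-- Hessian matrix of `u` at `x` (entries are second partial derivatives). -/
def hess {n : ℕ} (u : EuclideanSpace ℝ (Fin n) → ℝ) (x : EuclideanSpace ℝ (Fin n)) :
    Matrix (Fin n) (Fin n) ℝ :=
  Matrix.of fun i j =>
    iteratedFDeriv ℝ 2 u x ![EuclideanSpace.single i 1, EuclideanSpace.single j 1]

/-- Laplacian: trace of the Hessian. -/
def lapl {n : ℕ} (u : EuclideanSpace ℝ (Fin n) → ℝ) (x : EuclideanSpace ℝ (Fin n)) : ℝ :=
  ∑ i, hess u x i i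

/-- Quadratic form `zᵀ A z`. -/
def quadForm {n : ℕ} (A : Matrix (Fin n) (Fin n) ℝ) (z : EuclideanSpace ℝ (Fin n)) : ℝ :=
  ∑ i, ∑ j, z i * A i j * z j

/-- Largest eigenvalue of a (symmetric) matrix: the max of `zᵀAz` over unit vectors `z`. -/
def lamMax {n : ℕ} (A : Matrix (Fin n) (Fin n) ℝ) : ℝ :=
  sSup {r : ℝ | ∃ z : EuclideanSpace ℝ (Fin n), ‖z‖ = 1 ∧ r = quadForm A z}

open Classical in
/-- Dominative p-Laplacian `D_p u(x)`, for `2 ≤ p ≤ ∞`. -/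
def Dop {n : ℕ} (p : ℝ≥0∞) (u : EuclideanSpace ℝ (Fin n) → ℝ)
    (x : EuclideanSpace ℝ (Fin n)) : ℝ :=
  if p = ⊤ then lamMax (hess u x)
  else (p.toReal - 2) * lamMax (hess u x) + lapl u x

open Classical in
/-- p-Laplacian `Δ_p u(x)` (the `∞`-Laplacian `∇u H u ∇uᵀ` for `p = ∞`).
For finite `p`, `Δ_p u = |∇u|^{p-2} Δu + (p-2)|∇u|^{p-4} ∇u Hu ∇uᵀ` with real powers,
which is automatically `0` at critical points when `p > 2` and `Δu` when `p = 2`. -/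
def DeltaOp {n : ℕ} (p : ℝ≥0∞) (u : EuclideanSpace ℝ (Fin n) → ℝ)
    (x : EuclideanSpace ℝ (Fin n)) : ℝ :=
  if p = ⊤ then quadForm (hess u x) (gradient u x)
  else ‖gradient u x‖ ^ (p.toReal - 2) * lapl u x
    + (p.toReal - 2) * ‖gradient u x‖ ^ (p.toReal - 4) * quadForm (hess u x) (gradient u x)

open Classical in
/-- Radial profile `W_{k,p}` of the fundamental solution of the p-Laplace equation in ℝᵏ. -/
def Wfun (p : ℝ≥0∞) (k : ℕ) (r : ℝ) : ℝ :=
  if p = ⊤ ∨ k = 1 then -r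
  else if p.toReal = k then -Real.log r
  else -((p.toReal - 1) / (p.toReal - k)) * r ^ ((p.toReal - k) / (p.toReal - 1))

/-- Euclidean norm of a plain vector in `Fin k → ℝ`. -/
def enorm' {k : ℕ} (v : Fin k → ℝ) : ℝ := Real.sqrt (∑ i, v i ^ 2)

/-- `u : Ω → (-∞,∞]` is a viscosity supersolution of `G(∇u, Hu) = 0` on `Ω`:
lower semicontinuous, `> -∞`, finite on a dense subset of `Ω`, and every `C²`
test function `φ` touching `u` from below at `x₀ ∈ Ω` satisfies `G φ x₀ ≤ 0`. -/
def ViscSupersol {n : ℕ}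
    (G : (EuclideanSpace ℝ (Fin n) → ℝ) → EuclideanSpace ℝ (Fin n) → ℝ)
    (Ω : Set (EuclideanSpace ℝ (Fin n))) (u : EuclideanSpace ℝ (Fin n) → EReal) : Prop :=
  LowerSemicontinuousOn u Ω ∧
  (∀ x ∈ Ω, u x ≠ ⊥) ∧
  Ω ⊆ closure {x | x ∈ Ω ∧ u x ≠ ⊤} ∧
  ∀ x₀ ∈ Ω, ∀ φ : EuclideanSpace ℝ (Fin n) → ℝ,
    ContDiffAt ℝ 2 φ x₀ → (φ x₀ : EReal) = u x₀ →
    (∀ᶠ x in nhdsWithin x₀ Ω, (φ x : EReal) ≤ u x) → G φ x₀ ≤ 0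

open Classical in
/-- EReal-valued fundamental solution `w_{m,p}` on ℝᵐ, equal to `⊤` at the pole when `p ≤ m`,
`p ≠ ∞`. -/
def wEReal (p : ℝ≥0∞) (m : ℕ) (x : EuclideanSpace ℝ (Fin m)) : EReal :=
  if x = 0 ∧ p ≤ (m : ℝ≥0∞) ∧ p ≠ ⊤ then (⊤ : EReal)
  else ((Wfun p m ‖x‖ : ℝ) : EReal)

end


noncomputable section

namespace Stmt3Aux

variable {n k : ℕ} (Q : Matrix (Fin n) (Fin k) ℝ) (x₀ : EuclideanSpace ℝ (Fin n))

def yv (x : EuclideanSpace ℝ (Fin n)) : Fin k → ℝ := Qᵀ.mulVec fun i => x i - x₀ i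

lemma yv_apply (x : EuclideanSpace ℝ (Fin n)) (a : Fin k) :
    yv Q x₀ x a = ∑ i, Q i a * (x i - x₀ i) := by
  simp [yv, Matrix.mulVec, dotProduct, Matrix.transpose_apply]

def La (a : Fin k) : EuclideanSpace ℝ (Fin n) →L[ℝ] ℝ :=
  ∑ i, Q i a • (EuclideanSpace.proj (𝕜 := ℝ) i)

lemma La_apply (a : Fin k) (h : EuclideanSpace ℝ (Fin n)) :
    La Q a h = ∑ i, Q i a * h i := by
  simp [La]

lemma hasFDerivAt_yv (x : EuclideanSpace ℝ (Fin n)) (a : Fin k) :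
    HasFDerivAt (fun z => yv Q x₀ z a) (La Q a) x := by
  have h : (fun z : EuclideanSpace ℝ (Fin n) => yv Q x₀ z a)
      = fun z => La Q a z - La Q a x₀ := by
    funext z; simp [yv_apply, La_apply, mul_sub, Finset.sum_sub_distrib]
  rw [h]
  exact ((La Q a).hasFDerivAt).sub_const _

def sfun (x : EuclideanSpace ℝ (Fin n)) : ℝ := ∑ a, yv Q x₀ x a ^ 2

def Kc (x : EuclideanSpace ℝ (Fin n)) : EuclideanSpace ℝ (Fin n) →L[ℝ] ℝ :=
  ∑ a, yv Q x₀ x a • La Q a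

lemma Kc_apply (x : EuclideanSpace ℝ (Fin n)) (h : EuclideanSpace ℝ (Fin n)) :
    Kc Q x₀ x h = ∑ a, yv Q x₀ x a * La Q a h := by
  simp [Kc]

lemma hasFDerivAt_sfun (x : EuclideanSpace ℝ (Fin n)) :
    HasFDerivAt (sfun Q x₀) ((2:ℝ) • Kc Q x₀ x) x := by
  have h : ∀ a : Fin k, HasFDerivAt (fun z => yv Q x₀ z a ^ 2)
      ((2 * yv Q x₀ x a) • La Q a) x := by
    intro a
    have := (hasFDerivAt_yv Q x₀ x a).mul (hasFDerivAt_yv Q x₀ x a)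
    simp only [← pow_two] at this
    refine this.congr_fderiv (Eq.symm ?_)
    rw [two_mul, add_smul]
  have := HasFDerivAt.fun_sum (u := Finset.univ) fun a _ => h a
  refine this.congr_fderiv (Eq.symm ?_)
  unfold Kc
  rw [Finset.smul_sum]
  refine Finset.sum_congr rfl fun a _ => ?_
  rw [smul_smul]

def rfun (x : EuclideanSpace ℝ (Fin n)) : ℝ := Real.sqrt (sfun Q x₀ x)

lemma hasFDerivAt_rfun (x : EuclideanSpace ℝ (Fin n)) (hx : sfun Q x₀ x ≠ 0) :
    HasFDerivAt (rfun Q x₀) ((rfun Q x₀ x)⁻¹ • Kc Q x₀ x) x := by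
  have h := (hasFDerivAt_sfun Q x₀ x).sqrt hx
  refine h.congr_fderiv (Eq.symm ?_)
  rw [smul_smul]
  congr 1
  have hpos : 0 < sfun Q x₀ x :=
    lt_of_le_of_ne (Finset.sum_nonneg fun a _ => sq_nonneg _) (Ne.symm hx)
  have h2 : Real.sqrt (sfun Q x₀ x) ≠ 0 := (Real.sqrt_pos.mpr hpos).ne' 
  rw [rfun]
  field_simp


lemma sfun_pos (x : EuclideanSpace ℝ (Fin n)) (hx : yv Q x₀ x ≠ 0) : 0 < sfun Q x₀ x := by
  obtain ⟨a, ha⟩ := Function.ne_iff.mp hx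
  exact Finset.sum_pos' (fun b _ => sq_nonneg _) ⟨a, Finset.mem_univ a,
    lt_of_le_of_ne (sq_nonneg _) (Ne.symm (pow_ne_zero 2 ha))⟩

lemma rfun_pos (x : EuclideanSpace ℝ (Fin n)) (hx : yv Q x₀ x ≠ 0) : 0 < rfun Q x₀ x :=
  Real.sqrt_pos.mpr (sfun_pos Q x₀ x hx)

variable (U : ℝ → ℝ)

def Dmap (x : EuclideanSpace ℝ (Fin n)) : EuclideanSpace ℝ (Fin n) →L[ℝ] ℝ :=
  (deriv U (rfun Q x₀ x) / rfun Q x₀ x) • Kc Q x₀ x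

lemma hasFDerivAt_u (hU : ContDiff ℝ 2 U) (x : EuclideanSpace ℝ (Fin n))
    (hx : sfun Q x₀ x ≠ 0) :
    HasFDerivAt (fun z => U (rfun Q x₀ z)) (Dmap Q x₀ U x) x := by
  have hU1 : DifferentiableAt ℝ U (rfun Q x₀ x) :=
    (hU.differentiable (by norm_num)).differentiableAt
  have h := hU1.hasDerivAt.comp_hasFDerivAt x (hasFDerivAt_rfun Q x₀ x hx)
  refine h.congr_fderiv (Eq.symm ?_)
  rw [Dmap, smul_smul, div_eq_mul_inv]

def bvec (x : EuclideanSpace ℝ (Fin n)) : Fin n → ℝ := Q.mulVec (yv Q x₀ x)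

lemma bvec_apply (x : EuclideanSpace ℝ (Fin n)) (i : Fin n) :
    bvec Q x₀ x i = ∑ a, Q i a * yv Q x₀ x a := by
  simp [bvec, Matrix.mulVec, dotProduct]

def gvec (x : EuclideanSpace ℝ (Fin n)) : EuclideanSpace ℝ (Fin n) :=
  WithLp.toLp 2 fun i => (deriv U (rfun Q x₀ x) / rfun Q x₀ x) * bvec Q x₀ x i

lemma hasGradientAt_u (hU : ContDiff ℝ 2 U) (x : EuclideanSpace ℝ (Fin n))
    (hx : sfun Q x₀ x ≠ 0) :
    HasGradientAt (fun z => U (rfun Q x₀ z)) (gvec Q x₀ U x) x := by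
  rw [hasGradientAt_iff_hasFDerivAt]
  have h := hasFDerivAt_u Q x₀ U hU x hx
  have he : (InnerProductSpace.toDual ℝ (EuclideanSpace ℝ (Fin n))) (gvec Q x₀ U x)
      = Dmap Q x₀ U x := by
    ext h'
    simp only [InnerProductSpace.toDual_apply_apply, PiLp.inner_apply, RCLike.inner_apply,
      conj_trivial, Dmap, Kc_apply, La_apply, ContinuousLinearMap.coe_smul', Pi.smul_apply,
      smul_eq_mul, gvec, bvec_apply]
    have lhs : ∀ i : Fin n, (deriv U (rfun Q x₀ x) / rfun Q x₀ x * ∑ a, Q i a * yv Q x₀ x a)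
        * h' i = ∑ a, deriv U (rfun Q x₀ x) / rfun Q x₀ x * (Q i a * yv Q x₀ x a * h' i) := by
      intro i; rw [Finset.mul_sum, Finset.sum_mul]; exact Finset.sum_congr rfl fun a _ => by ring
    have rhs : ∀ a : Fin k, deriv U (rfun Q x₀ x) / rfun Q x₀ x *
        (yv Q x₀ x a * ∑ i, Q i a * h' i)
        = ∑ i, deriv U (rfun Q x₀ x) / rfun Q x₀ x * (Q i a * yv Q x₀ x a * h' i) := by
      intro a; rw [Finset.mul_sum, Finset.mul_sum]
      exact Finset.sum_congr rfl fun i _ => by ring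
    exact Eq.trans (Finset.sum_congr rfl fun i _ => (mul_comm _ _).trans (lhs i))
      (Eq.trans Finset.sum_comm (Eq.trans (Finset.sum_congr rfl fun a _ => (rhs a).symm)
        (Finset.mul_sum _ _ _).symm))
  rw [he]
  exact h

def LK : EuclideanSpace ℝ (Fin n) →L[ℝ] EuclideanSpace ℝ (Fin n) →L[ℝ] ℝ :=
  ∑ a, (La Q a).smulRight (La Q a)

def DD (x : EuclideanSpace ℝ (Fin n)) :
    EuclideanSpace ℝ (Fin n) →L[ℝ] EuclideanSpace ℝ (Fin n) →L[ℝ] ℝ :=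
  (deriv U (rfun Q x₀ x) / rfun Q x₀ x) • LK Q +
    (((deriv (deriv U) (rfun Q x₀ x) * rfun Q x₀ x - deriv U (rfun Q x₀ x) * 1) /
        rfun Q x₀ x ^ 2) • ((rfun Q x₀ x)⁻¹ • Kc Q x₀ x)).smulRight (Kc Q x₀ x)

lemma hasFDerivAt_Dmap (hU : ContDiff ℝ 2 U) (x : EuclideanSpace ℝ (Fin n))
    (hx : sfun Q x₀ x ≠ 0) :
    HasFDerivAt (Dmap Q x₀ U) (DD Q x₀ U x) x := by
  have hr0 : rfun Q x₀ x ≠ 0 := Real.sqrt_ne_zero'.mpr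
    (lt_of_le_of_ne (Finset.sum_nonneg fun a _ => sq_nonneg _) (Ne.symm hx))
  have hK : HasFDerivAt (Kc Q x₀) (LK Q) x :=
    HasFDerivAt.fun_sum fun a _ => (hasFDerivAt_yv Q x₀ x a).smul_const (La Q a)
  have hdU : ContDiff ℝ 1 (deriv U) := by
    have h2 : ContDiff ℝ (1 + 1 : ℕ) U := by exact_mod_cast hU
    exact (contDiff_succ_iff_deriv.mp (by exact_mod_cast h2)).2.2
  have hU'' : HasDerivAt (deriv U) (deriv (deriv U) (rfun Q x₀ x)) (rfun Q x₀ x) :=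
    ((hdU.differentiable one_ne_zero) _).hasDerivAt
  have hm : HasDerivAt (fun t => deriv U t / t)
      ((deriv (deriv U) (rfun Q x₀ x) * rfun Q x₀ x - deriv U (rfun Q x₀ x) * 1) /
        rfun Q x₀ x ^ 2) (rfun Q x₀ x) :=
    hU''.div (hasDerivAt_id' _) hr0
  have hmx := hm.comp_hasFDerivAt x (hasFDerivAt_rfun Q x₀ x hx)
  exact hmx.smul hK


lemma La_single (a : Fin k) (i : Fin n) :
    La Q a (EuclideanSpace.single i (1:ℝ)) = Q i a := by
  simp [La_apply, EuclideanSpace.single_apply]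

lemma Kc_single (x : EuclideanSpace ℝ (Fin n)) (j : Fin n) :
    Kc Q x₀ x (EuclideanSpace.single j (1:ℝ)) = bvec Q x₀ x j := by
  rw [Kc_apply, bvec_apply]
  exact Finset.sum_congr rfl fun a _ => by rw [La_single]; ring

lemma hess_eq (hU : ContDiff ℝ 2 U) (u : EuclideanSpace ℝ (Fin n) → ℝ)
    (hu : ∀ z, u z = U (enorm' (yv Q x₀ z))) (x : EuclideanSpace ℝ (Fin n))
    (hx : yv Q x₀ x ≠ 0) (i j : Fin n) :
    hess u x i j = (deriv U (rfun Q x₀ x) / rfun Q x₀ x) * (∑ a, Q i a * Q j a)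
      + ((deriv (deriv U) (rfun Q x₀ x) - deriv U (rfun Q x₀ x) / rfun Q x₀ x) / rfun Q x₀ x ^ 2)
        * (bvec Q x₀ x i * bvec Q x₀ x j) := by
  have hueq : u = fun z => U (rfun Q x₀ z) := funext fun z => by rw [hu z]; rfl
  subst hueq
  have hr0 : rfun Q x₀ x ≠ 0 := (rfun_pos Q x₀ x hx).ne'
  have hs0 : ∀ᶠ z in nhds x, sfun Q x₀ z ≠ 0 := by
    have hcont : Continuous (sfun Q x₀) :=
      Differentiable.continuous fun z => (hasFDerivAt_sfun Q x₀ z).differentiableAt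
    exact (isOpen_compl_singleton.preimage hcont).mem_nhds (sfun_pos Q x₀ x hx).ne'
  have hev : fderiv ℝ (fun z => U (rfun Q x₀ z)) =ᶠ[nhds x] Dmap Q x₀ U :=
    hs0.mono fun z hz => (hasFDerivAt_u Q x₀ U hU z hz).fderiv
  have h2 : fderiv ℝ (fderiv ℝ (fun z => U (rfun Q x₀ z))) x = DD Q x₀ U x := by
    rw [hev.fderiv_eq]
    exact (hasFDerivAt_Dmap Q x₀ U hU x (sfun_pos Q x₀ x hx).ne').fderiv
  show iteratedFDeriv ℝ 2 (fun z => U (rfun Q x₀ z)) x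
      ![EuclideanSpace.single i 1, EuclideanSpace.single j 1] = _
  rw [iteratedFDeriv_two_apply]
  simp only [Matrix.cons_val_zero, Matrix.cons_val_one, Matrix.head_cons]
  rw [h2]
  simp only [DD, LK, ContinuousLinearMap.add_apply, ContinuousLinearMap.smul_apply,
    ContinuousLinearMap.sum_apply, ContinuousLinearMap.smulRight_apply, smul_eq_mul,
    La_single, Kc_single]
  rw [Finset.mul_sum]
  field_simp


variable {n k : ℕ} (Q : Matrix (Fin n) (Fin k) ℝ)

lemma isometry_dot (hQ : Qᵀ * Q = 1) (w z : Fin k → ℝ) :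
    Q.mulVec w ⬝ᵥ Q.mulVec z = w ⬝ᵥ z := by
  rw [Matrix.dotProduct_mulVec, ← Matrix.mulVec_transpose, Matrix.mulVec_mulVec, hQ,
    Matrix.one_mulVec]

lemma proj_mulVec (hQ : Qᵀ * Q = 1) (w : Fin k → ℝ) :
    Qᵀ.mulVec (Q.mulVec w) = w := by
  rw [Matrix.mulVec_mulVec, hQ, Matrix.one_mulVec]

lemma dot_QQT (z : Fin n → ℝ) :
    z ⬝ᵥ (Q * Qᵀ).mulVec z = Qᵀ.mulVec z ⬝ᵥ Qᵀ.mulVec z := by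
  rw [← Matrix.mulVec_mulVec, Matrix.dotProduct_mulVec, ← Matrix.mulVec_transpose]

lemma dot_vecMulVec (b z : Fin n → ℝ) :
    z ⬝ᵥ (Matrix.vecMulVec b b).mulVec z = (b ⬝ᵥ z) ^ 2 := by
  have h : (Matrix.vecMulVec b b).mulVec z = fun i => b i * (b ⬝ᵥ z) := by
    funext i
    simp [Matrix.mulVec, Matrix.vecMulVec_apply, dotProduct, Finset.sum_mul, mul_assoc,
      Finset.mul_sum]
  rw [h]
  have : z ⬝ᵥ (fun i => b i * (b ⬝ᵥ z)) = (z ⬝ᵥ b) * (b ⬝ᵥ z) := by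
    simp [dotProduct, Finset.sum_mul, mul_assoc]
  rw [this, dotProduct_comm z b, sq]

/-- Cauchy-Schwarz for dotProduct -/
lemma dot_sq_le (f g : Fin k → ℝ) : (f ⬝ᵥ g) ^ 2 ≤ (f ⬝ᵥ f) * (g ⬝ᵥ g) := by
  have := Finset.sum_mul_sq_le_sq_mul_sq Finset.univ f g
  simpa [dotProduct, pow_two] using this

/-- `|Qᵀ z|² ≤ |z|²`. -/
lemma tz_le (hQ : Qᵀ * Q = 1) (z : Fin n → ℝ) :
    Qᵀ.mulVec z ⬝ᵥ Qᵀ.mulVec z ≤ z ⬝ᵥ z := by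
  set w := Qᵀ.mulVec z with hw
  have h1 : z ⬝ᵥ Q.mulVec w = w ⬝ᵥ w := by
    rw [Matrix.dotProduct_mulVec, ← Matrix.mulVec_transpose]
  have h2 : Q.mulVec w ⬝ᵥ Q.mulVec w = w ⬝ᵥ w := isometry_dot Q hQ w w
  have h3 : Q.mulVec w ⬝ᵥ z = w ⬝ᵥ w := by
    rw [dotProduct_comm, h1]
  have key : 0 ≤ (z - Q.mulVec w) ⬝ᵥ (z - Q.mulVec w) :=
    Finset.sum_nonneg fun i _ => mul_self_nonneg _
  have expand : (z - Q.mulVec w) ⬝ᵥ (z - Q.mulVec w)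
      = z ⬝ᵥ z - w ⬝ᵥ w := by
    rw [sub_dotProduct, dotProduct_sub, dotProduct_sub, h1, h2, h3]
    ring
  linarith [key, expand ▸ key]


lemma quadForm_dot {n : ℕ} (A : Matrix (Fin n) (Fin n) ℝ) (z : EuclideanSpace ℝ (Fin n)) :
    quadForm A z = (fun i => z i) ⬝ᵥ A.mulVec (fun i => z i) := by
  simp [quadForm, dotProduct, Matrix.mulVec, Finset.mul_sum, mul_assoc]

lemma norm_sq_dot {n : ℕ} (z : EuclideanSpace ℝ (Fin n)) (hz : ‖z‖ = 1) :
    (fun i => z i) ⬝ᵥ (fun i => z i) = 1 := by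
  have h := EuclideanSpace.norm_eq z
  rw [hz] at h
  have h2 : ∑ i, ‖z i‖ ^ 2 = 1 := Real.sqrt_eq_one.mp h.symm
  simpa [dotProduct, Real.norm_eq_abs, sq_abs, pow_two] using h2

def Mmat {n k : ℕ} (Q : Matrix (Fin n) (Fin k) ℝ) (y : Fin k → ℝ) (r m B : ℝ) :
    Matrix (Fin n) (Fin n) ℝ :=
  Matrix.of fun i j => m * (∑ a, Q i a * Q j a)
    + ((B - m) / r ^ 2) * (Q.mulVec y i * Q.mulVec y j)

lemma Mmat_eq {n k : ℕ} (Q : Matrix (Fin n) (Fin k) ℝ) (y : Fin k → ℝ) (r m B : ℝ) :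
    Mmat Q y r m B = m • (Q * Qᵀ)
      + ((B - m) / r ^ 2) • Matrix.vecMulVec (Q.mulVec y) (Q.mulVec y) := by
  ext i j
  simp [Mmat, Matrix.mul_apply, Matrix.vecMulVec_apply, Matrix.transpose_apply,
    Finset.mul_sum]

lemma quadForm_Mmat {n k : ℕ} (Q : Matrix (Fin n) (Fin k) ℝ) (y : Fin k → ℝ) (r m B : ℝ)
    (z : EuclideanSpace ℝ (Fin n)) :
    quadForm (Mmat Q y r m B) z
      = m * (Qᵀ.mulVec (fun i => z i) ⬝ᵥ Qᵀ.mulVec (fun i => z i))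
        + ((B - m) / r ^ 2) * (Q.mulVec y ⬝ᵥ (fun i => z i)) ^ 2 := by
  rw [quadForm_dot, Mmat_eq, Matrix.add_mulVec, dotProduct_add,
    Matrix.smul_mulVec, Matrix.smul_mulVec, dotProduct_smul,
    dotProduct_smul, dot_QQT, dot_vecMulVec]
  simp [smul_eq_mul]

lemma isGreatest_Mmat {n k : ℕ} (Q : Matrix (Fin n) (Fin k) ℝ) (hQ : Qᵀ * Q = 1)
    (y : Fin k → ℝ) (r m B : ℝ) (hr : 0 < r) (hy : y ⬝ᵥ y = r ^ 2) (hmB : m ≤ B)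
    (hside : (∀ z : Fin n → ℝ, Qᵀ.mulVec z ⬝ᵥ Qᵀ.mulVec z = z ⬝ᵥ z) ∨ 0 ≤ B) :
    IsGreatest {t : ℝ | ∃ z : EuclideanSpace ℝ (Fin n), ‖z‖ = 1 ∧ t = quadForm (Mmat Q y r m B) z}
      B := by
  have hr2 : (0:ℝ) < r ^ 2 := by positivity
  have hbb : Q.mulVec y ⬝ᵥ Q.mulVec y = r ^ 2 := by rw [isometry_dot Q hQ, hy]
  constructor
  · -- B is attained at v = b / r
    refine ⟨WithLp.toLp 2 (fun i => Q.mulVec y i / r : Fin n → ℝ), ?_, ?_⟩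
    · rw [EuclideanSpace.norm_eq]
      have : ∑ i, ‖Q.mulVec y i / r‖ ^ 2 = 1 := by
        have : ∑ i, ‖Q.mulVec y i / r‖ ^ 2 = (∑ i, Q.mulVec y i * Q.mulVec y i) / r ^ 2 := by
          rw [Finset.sum_div]
          exact Finset.sum_congr rfl fun i _ => by
            rw [Real.norm_eq_abs, sq_abs, div_pow, pow_two]
        rw [this, show (∑ i, Q.mulVec y i * Q.mulVec y i) = r ^ 2 from hbb,
          div_self hr2.ne']
      rw [this, Real.sqrt_one]
    · rw [quadForm_Mmat]
      have hvz : (fun i => (fun i => Q.mulVec y i / r) i : Fin n → ℝ)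
          = r⁻¹ • Q.mulVec y := by
        funext i; simp [div_eq_inv_mul, mul_comm]
      rw [hvz]
      have h1 : Qᵀ.mulVec (r⁻¹ • Q.mulVec y) = r⁻¹ • y := by
        rw [Matrix.mulVec_smul, proj_mulVec Q hQ]
      rw [h1]
      have h2 : (r⁻¹ • y : Fin k → ℝ) ⬝ᵥ (r⁻¹ • y) = 1 := by
        rw [smul_dotProduct, dotProduct_smul, hy]
        simp [smul_eq_mul]
        field_simp
      have h3 : Q.mulVec y ⬝ᵥ (r⁻¹ • Q.mulVec y) = r := by
        rw [dotProduct_smul, hbb]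
        simp [smul_eq_mul]
        field_simp
      rw [h2, h3]
      field_simp
      ring
  · -- upper bound
    rintro t ⟨z, hz, rfl⟩
    rw [quadForm_Mmat]
    set z' : Fin n → ℝ := fun i => z i with hz'
    set w := Qᵀ.mulVec z' with hw
    have hzz : z' ⬝ᵥ z' = 1 := norm_sq_dot z hz
    have ht0 : 0 ≤ w ⬝ᵥ w := Finset.sum_nonneg fun i _ => mul_self_nonneg _
    have ht1 : w ⬝ᵥ w ≤ 1 := by
      have := tz_le Q hQ z'
      rwa [hzz] at this
    have hd : Q.mulVec y ⬝ᵥ z' = w ⬝ᵥ y := by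
      rw [dotProduct_comm, Matrix.dotProduct_mulVec, ← Matrix.mulVec_transpose]
    have hcs : (Q.mulVec y ⬝ᵥ z') ^ 2 ≤ (w ⬝ᵥ w) * r ^ 2 := by
      rw [hd]
      calc (w ⬝ᵥ y) ^ 2 ≤ (w ⬝ᵥ w) * (y ⬝ᵥ y) := dot_sq_le w y
        _ = (w ⬝ᵥ w) * r ^ 2 := by rw [hy]
    have hBt : B * (w ⬝ᵥ w) ≤ B := by
      rcases hside with h | hB
      · rw [h z', hzz, mul_one]
      · nlinarith
    have h1 : ((B - m) / r ^ 2) * (Q.mulVec y ⬝ᵥ z') ^ 2 ≤ (B - m) * (w ⬝ᵥ w) := by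
      rw [div_mul_eq_mul_div, div_le_iff₀ hr2]
      nlinarith [sq_nonneg (Q.mulVec y ⬝ᵥ z')]
    nlinarith

lemma lamMax_Mmat {n k : ℕ} (Q : Matrix (Fin n) (Fin k) ℝ) (hQ : Qᵀ * Q = 1)
    (y : Fin k → ℝ) (r m B : ℝ) (hr : 0 < r) (hy : y ⬝ᵥ y = r ^ 2) (hmB : m ≤ B)
    (hside : (∀ z : Fin n → ℝ, Qᵀ.mulVec z ⬝ᵥ Qᵀ.mulVec z = z ⬝ᵥ z) ∨ 0 ≤ B) :
    lamMax (Mmat Q y r m B) = B :=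
  (isGreatest_Mmat Q hQ y r m B hr hy hmB hside).csSup_eq

section PointFacts

variable {n k : ℕ} (Q : Matrix (Fin n) (Fin k) ℝ) (x₀ : EuclideanSpace ℝ (Fin n)) (U : ℝ → ℝ)

lemma ydot (x : EuclideanSpace ℝ (Fin n)) :
    yv Q x₀ x ⬝ᵥ yv Q x₀ x = rfun Q x₀ x ^ 2 := by
  have h1 : yv Q x₀ x ⬝ᵥ yv Q x₀ x = sfun Q x₀ x := by
    simp [dotProduct, sfun, pow_two]
  have h0 : 0 ≤ sfun Q x₀ x := Finset.sum_nonneg fun a _ => sq_nonneg _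
  rw [h1, rfun]
  exact (Real.sq_sqrt h0).symm

lemma hess_eq_Mmat (hU : ContDiff ℝ 2 U) (u : EuclideanSpace ℝ (Fin n) → ℝ)
    (hu : ∀ z, u z = U (enorm' (yv Q x₀ z))) (x : EuclideanSpace ℝ (Fin n))
    (hx : yv Q x₀ x ≠ 0) :
    hess u x = Mmat Q (yv Q x₀ x) (rfun Q x₀ x)
      (deriv U (rfun Q x₀ x) / rfun Q x₀ x) (deriv (deriv U) (rfun Q x₀ x)) := by
  ext i j
  have h := hess_eq Q x₀ U hU u hu x hx i j
  rw [show hess u x i j = hess u x i j from rfl] at h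
  rw [h]
  rfl

lemma grad_eq (hU : ContDiff ℝ 2 U) (u : EuclideanSpace ℝ (Fin n) → ℝ)
    (hu : ∀ z, u z = U (enorm' (yv Q x₀ z))) (x : EuclideanSpace ℝ (Fin n))
    (hx : yv Q x₀ x ≠ 0) :
    gradient u x = gvec Q x₀ U x := by
  have hueq : u = fun z => U (rfun Q x₀ z) := funext fun z => by rw [hu z]; rfl
  rw [hueq]
  exact (hasGradientAt_u Q x₀ U hU x (sfun_pos Q x₀ x hx).ne').gradient

lemma gvec_fun (x : EuclideanSpace ℝ (Fin n)) :
    (fun i => gvec Q x₀ U x i : Fin n → ℝ)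
      = (deriv U (rfun Q x₀ x) / rfun Q x₀ x) • Q.mulVec (yv Q x₀ x) := by
  funext i; simp [gvec, bvec]

lemma norm_gvec (x : EuclideanSpace ℝ (Fin n)) (hQ : Qᵀ * Q = 1) (hx : yv Q x₀ x ≠ 0) :
    ‖gvec Q x₀ U x‖ = |deriv U (rfun Q x₀ x)| := by
  have hr : 0 < rfun Q x₀ x := rfun_pos Q x₀ x hx
  have hbb : Q.mulVec (yv Q x₀ x) ⬝ᵥ Q.mulVec (yv Q x₀ x) = rfun Q x₀ x ^ 2 := by
    rw [isometry_dot Q hQ, ydot]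
  rw [EuclideanSpace.norm_eq]
  have h1 : ∑ i, ‖gvec Q x₀ U x i‖ ^ 2 = deriv U (rfun Q x₀ x) ^ 2 := by
    have h2 : ∀ i, ‖gvec Q x₀ U x i‖ ^ 2
        = (deriv U (rfun Q x₀ x) / rfun Q x₀ x) ^ 2
          * (Q.mulVec (yv Q x₀ x) i * Q.mulVec (yv Q x₀ x) i) := by
      intro i
      rw [Real.norm_eq_abs, sq_abs]
      simp [gvec, bvec]
      ring
    rw [Finset.sum_congr rfl fun i _ => h2 i, ← Finset.mul_sum,
      show (∑ i, Q.mulVec (yv Q x₀ x) i * Q.mulVec (yv Q x₀ x) i) = rfun Q x₀ x ^ 2 from hbb]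
    field_simp
  rw [h1, Real.sqrt_sq_eq_abs]

lemma quad_grad (x : EuclideanSpace ℝ (Fin n)) (hQ : Qᵀ * Q = 1) (hx : yv Q x₀ x ≠ 0) :
    quadForm (Mmat Q (yv Q x₀ x) (rfun Q x₀ x)
        (deriv U (rfun Q x₀ x) / rfun Q x₀ x) (deriv (deriv U) (rfun Q x₀ x)))
      (gvec Q x₀ U x)
    = deriv U (rfun Q x₀ x) ^ 2 * deriv (deriv U) (rfun Q x₀ x) := by
  set r := rfun Q x₀ x with hrdef
  set y := yv Q x₀ x with hydef
  set A := deriv U r with hA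
  set B := deriv (deriv U) r with hB
  set m := A / r with hm
  have hr : 0 < r := rfun_pos Q x₀ x hx
  have hbb : Q.mulVec y ⬝ᵥ Q.mulVec y = r ^ 2 := by rw [isometry_dot Q hQ, ydot]
  rw [quadForm_Mmat, gvec_fun]
  have h1 : Qᵀ.mulVec (m • Q.mulVec y) = m • y := by
    rw [Matrix.mulVec_smul, proj_mulVec Q hQ]
  rw [h1]
  have h2 : (m • y : Fin k → ℝ) ⬝ᵥ (m • y) = m ^ 2 * r ^ 2 := by
    rw [smul_dotProduct, dotProduct_smul, ydot]
    simp [smul_eq_mul]; ring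
  have h3 : Q.mulVec y ⬝ᵥ (m • Q.mulVec y : Fin n → ℝ) = m * r ^ 2 := by
    rw [dotProduct_smul, hbb]; simp [smul_eq_mul]
  rw [h2, h3]
  rw [hm]
  field_simp
  ring

end PointFacts

end Stmt3Aux


/-- Cylindrical Equivalence. -/
theorem stmt_3 {n k : ℕ} (hn : 2 ≤ n) (hk1 : 1 ≤ k) (hkn : k ≤ n)
    (p : ℝ≥0∞) (hp : 2 ≤ p)
    (Q : Matrix (Fin n) (Fin k) ℝ) (hQ : Qᵀ * Q = 1)
    (x₀ : EuclideanSpace ℝ (Fin n))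
    (U : ℝ → ℝ) (hU : ContDiff ℝ 2 U)
    (u : EuclideanSpace ℝ (Fin n) → ℝ)
    (hu : ∀ x, u x = U (enorm' (Qᵀ.mulVec fun i => x i - x₀ i)))
    (hU1 : ∀ r : ℝ, 0 < r → deriv U r / r ≤ deriv (deriv U) r)
    (hU2 : k < n → ∀ r : ℝ, 0 < r → 0 ≤ deriv (deriv U) r) :
    ∀ x : EuclideanSpace ℝ (Fin n), (Qᵀ.mulVec fun i => x i - x₀ i) ≠ 0 →
      DeltaOp p u x =
        (if p = ⊤ then ‖gradient u x‖ ^ (2 : ℝ) else ‖gradient u x‖ ^ (p.toReal - 2))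
          * Dop p u x := by
  intro x hx
  have hx' : Stmt3Aux.yv Q x₀ x ≠ 0 := hx
  have hu' : ∀ z, u z = U (enorm' (Stmt3Aux.yv Q x₀ z)) := hu
  set r := Stmt3Aux.rfun Q x₀ x with hrdef
  have hr : 0 < r := Stmt3Aux.rfun_pos Q x₀ x hx'
  set A := deriv U r with hA
  set B := deriv (deriv U) r with hB
  set m := A / r with hm
  have hy : Stmt3Aux.yv Q x₀ x ⬝ᵥ Stmt3Aux.yv Q x₀ x = r ^ 2 := Stmt3Aux.ydot Q x₀ x
  have hmB : m ≤ B := hU1 r hr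
  have hside : (∀ z : Fin n → ℝ, Qᵀ.mulVec z ⬝ᵥ Qᵀ.mulVec z = z ⬝ᵥ z) ∨ 0 ≤ B := by
    rcases lt_or_eq_of_le hkn with hlt | heq
    · exact Or.inr (hU2 hlt r hr)
    · subst heq
      have hQQ : Q * Qᵀ = 1 := mul_eq_one_comm.mp hQ
      refine Or.inl fun z => ?_
      rw [← Stmt3Aux.dot_QQT Q z, hQQ, Matrix.one_mulVec]
  have hHess : hess u x = Stmt3Aux.Mmat Q (Stmt3Aux.yv Q x₀ x) r m B :=
    Stmt3Aux.hess_eq_Mmat Q x₀ U hU u hu' x hx'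
  have hGrad : gradient u x = Stmt3Aux.gvec Q x₀ U x := Stmt3Aux.grad_eq Q x₀ U hU u hu' x hx'
  have hNorm : ‖gradient u x‖ = |A| := by rw [hGrad]; exact Stmt3Aux.norm_gvec Q x₀ U x hQ hx'
  have hLam : lamMax (hess u x) = B := by
    rw [hHess]
    exact Stmt3Aux.lamMax_Mmat Q hQ _ r m B hr hy hmB hside
  have hQuad : quadForm (hess u x) (gradient u x) = A ^ 2 * B := by
    rw [hHess, hGrad]
    exact Stmt3Aux.quad_grad Q x₀ U x hQ hx'
  have habs2 : |A| ^ (2:ℝ) = A ^ 2 := by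
    rw [show (2:ℝ) = ((2:ℕ):ℝ) by norm_num, Real.rpow_natCast, sq_abs]
  by_cases hp' : p = ⊤
  · simp only [DeltaOp, Dop, hp', if_pos]
    rw [hQuad, hLam, hNorm, habs2]
  · simp only [DeltaOp, Dop, hp', if_neg, ite_false]
    set q := p.toReal with hq
    rw [hQuad, hLam, hNorm]
    have key : (q - 2) * |A| ^ (q - 4) * (A ^ 2 * B) = (q - 2) * |A| ^ (q - 2) * B := by
      rcases eq_or_ne A 0 with hA0 | hA0
      · rcases eq_or_ne q 2 with hq2 | hq2
        · rw [hq2]; ring_nf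
        · rw [hA0]
          rw [show |(0:ℝ)| = 0 from abs_zero, Real.zero_rpow (sub_ne_zero.mpr hq2)]
          ring_nf
      · have habs : 0 < |A| := abs_pos.mpr hA0
        have h4 : |A| ^ (q - 4) * A ^ 2 = |A| ^ (q - 2) := by
          rw [← sq_abs, show |A| ^ 2 = |A| ^ ((2:ℕ):ℝ) from (Real.rpow_natCast _ 2).symm,
            ← Real.rpow_add habs]
          congr 1
          ring
        calc (q - 2) * |A| ^ (q - 4) * (A ^ 2 * B)
            = (q - 2) * (|A| ^ (q - 4) * A ^ 2) * B := by ring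
          _ = (q - 2) * |A| ^ (q - 2) * B := by rw [h4]
    linear_combination key
end
end

section
/- (Cylindrical fundamental solutions are dominative p-harmonic.) Let n ≥ 2 and 2 ≤ p ≤ ∞, and let u(x) = C₁·w_{k,p}(Qᵀ(x−x₀)) + C₂ be a cylindrical fundamental solution (C₁ ≥ 0, C₂ ∈ ℝ, 1 ≤ k ≤ n, Q an n×k real matrix with QᵀQ = I_k, x₀ ∈ ℝⁿ). Then at every point x with Qᵀ(x−x₀) ≠ 0 one has D_p u(x) = 0 and Δ_p u(x) = 0. -/
open scoped ENNReal
open Filter Matrix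

set_option maxHeartbeats 2000000 in
lemma cyl_key {n k : ℕ}
    (Q : Matrix (Fin n) (Fin k) ℝ) (hQ : Qᵀ * Q = 1)
    (x₀ : EuclideanSpace ℝ (Fin n)) (C₁ C₂ : ℝ) (hC₁ : 0 ≤ C₁)
    (u : EuclideanSpace ℝ (Fin n) → ℝ)
    (f : ℝ → ℝ) (β : ℝ) (hβ : β ≤ 1/2)
    (hf : ∀ t : ℝ, 0 < t → HasDerivAt f (-(1/2) * t ^ (β - 1)) t)
    (hu : ∀ x' : EuclideanSpace ℝ (Fin n),
      u x' = C₁ * f (∑ l, (∑ i, Q i l * (x' i - x₀ i)) ^ 2) + C₂)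
    (x : EuclideanSpace ℝ (Fin n)) (s : ℝ)
    (hs : s = ∑ l, (∑ i, Q i l * (x i - x₀ i)) ^ 2) (hspos : 0 < s) :
    lamMax (hess u x) = C₁ * s ^ (β - 1) * (1 - 2 * β) ∧
    lapl u x = C₁ * s ^ (β - 1) * (2 * (1 - β) - k) ∧
    ‖gradient u x‖ = C₁ * s ^ (β - 1/2) ∧
    quadForm (hess u x) (gradient u x) = C₁ ^ 3 * s ^ (3 * β - 2) * (1 - 2 * β) := by
  classical
  -- power helpers
  have hrw : ∀ a b : ℝ, s ^ a * s ^ b = s ^ (a + b) := fun a b => (Real.rpow_add hspos a b).symm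
  have hmul1 : ∀ a : ℝ, s ^ a * s = s ^ (a + 1) := by
    intro a
    rw [show s ^ a * s = s ^ a * s ^ (1 : ℝ) by rw [Real.rpow_one], hrw]
  -- basic algebraic data
  have hQe : ∀ l l' : Fin k, (∑ i, Q i l * Q i l') = if l = l' then 1 else 0 := by
    intro l l'
    have h := congrFun (congrFun hQ l) l'
    simpa [Matrix.mul_apply, Matrix.one_apply, Matrix.transpose_apply] using h
  set y : EuclideanSpace ℝ (Fin n) → Fin k → ℝ :=
    fun x' l => ∑ i, Q i l * (x' i - x₀ i) with hy_def
  set q : EuclideanSpace ℝ (Fin n) → ℝ := fun x' => ∑ l, y x' l ^ 2 with hq_def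
  set L : Fin k → (EuclideanSpace ℝ (Fin n)) →L[ℝ] ℝ :=
    fun l => ∑ i, Q i l • (EuclideanSpace.proj (𝕜 := ℝ) i) with hL_def
  set w : Fin n → ℝ := fun i => ∑ l, Q i l * y x l with hw_def
  have hqx : q x = s := by rw [hs]
  have hys : ∑ l, y x l ^ 2 = s := by rw [hs]
  have hL : ∀ l (v : EuclideanSpace ℝ (Fin n)), L l v = ∑ i, Q i l * v i := by
    intro l v
    simp [hL_def]
  have hLe : ∀ l i, L l (EuclideanSpace.single i (1:ℝ)) = Q i l := by
    intro l i
    rw [hL]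
    simp [EuclideanSpace.single_apply]
  have hy : ∀ (x' : EuclideanSpace ℝ (Fin n)) l, HasFDerivAt (fun x'' => y x'' l) (L l) x' := by
    intro x' l
    have heq : (fun x'' : EuclideanSpace ℝ (Fin n) => y x'' l)
        = fun x'' => L l x'' - ∑ i, Q i l * x₀ i := by
      funext x''
      rw [hL]
      simp [hy_def, mul_sub, Finset.sum_sub_distrib]
    rw [heq]
    exact (L l).hasFDerivAt.sub_const _
  have hqd : ∀ x' : EuclideanSpace ℝ (Fin n),
      HasFDerivAt q (∑ l, (2 * y x' l) • L l) x' := by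
    intro x'
    rw [hq_def]
    apply HasFDerivAt.fun_sum
    intro l _
    have h2 := (hy x' l).mul (hy x' l)
    have heq : (fun x'' : EuclideanSpace ℝ (Fin n) => y x'' l ^ 2)
        = fun x'' => y x'' l * y x'' l := by funext x''; ring
    rw [heq]
    refine h2.congr_fderiv ?_
    symm
    rw [two_mul, add_smul]
  have hqc : Continuous q := by
    have : Differentiable ℝ q := fun x' => (hqd x').differentiableAt
    exact this.continuous
  have hU : {x' : EuclideanSpace ℝ (Fin n) | 0 < q x'} ∈ nhds x :=
    (isOpen_lt continuous_const hqc).mem_nhds (by simpa [Set.mem_setOf_eq, hqx] using hspos)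
  have hud : ∀ x' : EuclideanSpace ℝ (Fin n), 0 < q x' → HasFDerivAt u
      ((C₁ * (-(1/2) * q x' ^ (β - 1))) • (∑ l, (2 * y x' l) • L l)) x' := by
    intro x' hx'
    have h1 : HasDerivAt f (-(1/2) * q x' ^ (β - 1)) (q x') := hf _ hx'
    have h2 := h1.comp_hasFDerivAt x' (hqd x')
    have h3 := (h2.const_mul C₁).add_const C₂
    have heq : (fun x'' => C₁ * (f ∘ q) x'' + C₂) = u := by
      funext x''
      rw [hu x'']
      simp [Function.comp, hq_def, hy_def]
    rw [heq] at h3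
    rw [mul_smul]
    exact h3
  have hF : fderiv ℝ u =ᶠ[nhds x]
      fun x' => (C₁ * (-(1/2) * q x' ^ (β - 1))) • (∑ l, (2 * y x' l) • L l) := by
    filter_upwards [hU] with x' hx'
    exact (hud x' hx').fderiv
  have hr2 : HasDerivAt (fun t : ℝ => -(1/2) * t ^ (β - 1)) ((1/2) * (1 - β) * s ^ (β - 2)) s := by
    have h := (Real.hasDerivAt_rpow_const (x := s) (p := β - 1) (Or.inl hspos.ne')).const_mul
      (-(1/2) : ℝ)
    refine h.congr_deriv ?_
    symm
    rw [show β - 1 - 1 = β - 2 from by ring]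
    ring
  have hc : HasFDerivAt (fun x' => C₁ * (-(1/2) * q x' ^ (β - 1)))
      ((C₁ * ((1/2) * (1 - β) * s ^ (β - 2))) • (∑ l, (2 * y x l) • L l)) x := by
    have hr' : HasDerivAt (fun t : ℝ => -(1/2) * t ^ (β - 1))
        ((1/2) * (1 - β) * s ^ (β - 2)) (q x) := hqx ▸ hr2
    have h4 := (hr'.comp_hasFDerivAt x (hqd x)).const_mul C₁
    rw [mul_smul]
    exact h4
  have hT : HasFDerivAt (fun x' => ∑ l, (2 * y x' l) • L l)
      (∑ l, ((2:ℝ) • L l).smulRight (L l)) x := by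
    apply HasFDerivAt.fun_sum
    intro l _
    have h1 : HasFDerivAt (fun x' => 2 * y x' l) ((2:ℝ) • L l) x := (hy x l).const_mul 2
    exact h1.smul_const (L l)
  have hG := hc.smul hT
  rw [hqx] at hG
  have h2d : fderiv ℝ (fderiv ℝ u) x
      = (C₁ * (-(1/2) * s ^ (β - 1))) • (∑ l, ((2:ℝ) • L l).smulRight (L l))
        + ((C₁ * ((1/2) * (1 - β) * s ^ (β - 2))) • (∑ l, (2 * y x l) • L l)).smulRight
          (∑ l, (2 * y x l) • L l) := by
    rw [hF.fderiv_eq]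
    exact hG.fderiv
  have hhess : ∀ i j, hess u x i j =
      2 * C₁ * (1 - β) * s ^ (β - 2) * w i * w j
        - C₁ * s ^ (β - 1) * (∑ l, Q i l * Q j l) := by
    intro i j
    show iteratedFDeriv ℝ 2 u x ![EuclideanSpace.single i 1, EuclideanSpace.single j 1] = _
    rw [iteratedFDeriv_two_apply, h2d]
    simp only [ContinuousLinearMap.add_apply, ContinuousLinearMap.smul_apply,
      ContinuousLinearMap.smulRight_apply, ContinuousLinearMap.coe_sum',
      Finset.sum_apply, Matrix.cons_val_zero, Matrix.cons_val_one, Matrix.head_cons,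
      smul_eq_mul, hLe]
    have e1 : ∀ i' : Fin n, (∑ l, 2 * y x l * Q i' l) = 2 * w i' := by
      intro i'
      rw [hw_def, Finset.mul_sum]
      exact Finset.sum_congr rfl fun l _ => by ring
    rw [e1 i, e1 j, show (∑ x : Fin k, 2 * Q i x * Q j x) = 2 * ∑ l, Q i l * Q j l from by
      rw [Finset.mul_sum]; exact Finset.sum_congr rfl fun l _ => by ring]
    ring
  have hMz : ∀ z : Fin n → ℝ, (∑ i, ∑ j, z i * (∑ l, Q i l * Q j l) * z j)
      = ∑ l, (∑ i, Q i l * z i) ^ 2 := by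
    intro z
    have h1 : ∀ i j : Fin n, z i * (∑ l, Q i l * Q j l) * z j
        = ∑ l, (Q i l * z i) * (Q j l * z j) := by
      intro i j
      rw [Finset.mul_sum, Finset.sum_mul]
      exact Finset.sum_congr rfl fun l _ => by ring
    calc ∑ i, ∑ j, z i * (∑ l, Q i l * Q j l) * z j
        = ∑ i, ∑ j, ∑ l, (Q i l * z i) * (Q j l * z j) :=
          Finset.sum_congr rfl fun i _ => Finset.sum_congr rfl fun j _ => h1 i j
      _ = ∑ i, ∑ l, ∑ j, (Q i l * z i) * (Q j l * z j) :=
          Finset.sum_congr rfl fun i _ => Finset.sum_comm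
      _ = ∑ l, ∑ i, ∑ j, (Q i l * z i) * (Q j l * z j) := Finset.sum_comm
      _ = ∑ l, (∑ i, Q i l * z i) * (∑ j, Q j l * z j) :=
          Finset.sum_congr rfl fun l _ => (Finset.sum_mul_sum _ _ _ _).symm
      _ = ∑ l, (∑ i, Q i l * z i) ^ 2 := Finset.sum_congr rfl fun l _ => (sq _).symm
  have hquad : ∀ z : EuclideanSpace ℝ (Fin n), quadForm (hess u x) z
      = 2 * C₁ * (1 - β) * s ^ (β - 2) * (∑ i, w i * z i) ^ 2
        - C₁ * s ^ (β - 1) * ∑ l, (∑ i, Q i l * z i) ^ 2 := by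
    intro z
    have step1 : quadForm (hess u x) z = ∑ i, ∑ j, z i *
        (2 * C₁ * (1 - β) * s ^ (β - 2) * w i * w j
          - C₁ * s ^ (β - 1) * (∑ l, Q i l * Q j l)) * z j := by
      simp only [quadForm]
      exact Finset.sum_congr rfl fun i _ => Finset.sum_congr rfl fun j _ => by rw [hhess i j]
    rw [step1]
    have expand : ∀ i, (∑ j, z i *
        (2 * C₁ * (1 - β) * s ^ (β - 2) * w i * w j
          - C₁ * s ^ (β - 1) * (∑ l, Q i l * Q j l)) * z j)
        = 2 * C₁ * (1 - β) * s ^ (β - 2) * (w i * z i) * (∑ j, w j * z j)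
          - C₁ * s ^ (β - 1) * ∑ j, z i * (∑ l, Q i l * Q j l) * z j := by
      intro i
      rw [Finset.mul_sum Finset.univ (fun j => w j * z j)
          (2 * C₁ * (1 - β) * s ^ (β - 2) * (w i * z i)),
        Finset.mul_sum Finset.univ (fun j => z i * (∑ l, Q i l * Q j l) * z j)
          (C₁ * s ^ (β - 1)), ← Finset.sum_sub_distrib]
      exact Finset.sum_congr rfl fun j _ => by ring
    rw [Finset.sum_congr rfl fun i _ => expand i, Finset.sum_sub_distrib,
      ← Finset.sum_mul, ← Finset.mul_sum, ← Finset.mul_sum, hMz z]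
    ring
  have hw2 : ∑ i, w i ^ 2 = s := by
    calc ∑ i, w i ^ 2 = ∑ i, ∑ l, ∑ l', (Q i l * y x l) * (Q i l' * y x l') := by
          refine Finset.sum_congr rfl fun i _ => ?_
          rw [hw_def, sq, Finset.sum_mul_sum]
      _ = ∑ l, ∑ i, ∑ l', (Q i l * y x l) * (Q i l' * y x l') := Finset.sum_comm
      _ = ∑ l, ∑ l', ∑ i, (Q i l * y x l) * (Q i l' * y x l') :=
          Finset.sum_congr rfl fun l _ => Finset.sum_comm
      _ = ∑ l, ∑ l', (y x l * y x l') * ∑ i, Q i l * Q i l' := by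
          refine Finset.sum_congr rfl fun l _ => Finset.sum_congr rfl fun l' _ => ?_
          rw [Finset.mul_sum]
          exact Finset.sum_congr rfl fun i _ => by ring
      _ = ∑ l, y x l ^ 2 := by
          refine Finset.sum_congr rfl fun l _ => ?_
          rw [Finset.sum_congr rfl fun l' (_ : l' ∈ Finset.univ) => by rw [hQe l l']]
          simp [mul_ite, Finset.sum_ite_eq, sq]
      _ = s := hys
  have hQw : ∀ l, ∑ i, Q i l * w i = y x l := by
    intro l
    calc ∑ i, Q i l * w i = ∑ i, ∑ l', Q i l * (Q i l' * y x l') := by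
          refine Finset.sum_congr rfl fun i _ => ?_
          rw [hw_def, Finset.mul_sum]
      _ = ∑ l', ∑ i, Q i l * (Q i l' * y x l') := Finset.sum_comm
      _ = ∑ l', (∑ i, Q i l * Q i l') * y x l' := by
          refine Finset.sum_congr rfl fun l' _ => ?_
          rw [Finset.sum_mul]
          exact Finset.sum_congr rfl fun i _ => by ring
      _ = y x l := by
          rw [Finset.sum_congr rfl fun l' (_ : l' ∈ Finset.univ) => by rw [hQe l l']]
          simp [ite_mul, Finset.sum_ite_eq]
  have hg0 : 0 < q x := by rw [hqx]; exact hspos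
  set g : EuclideanSpace ℝ (Fin n) := WithLp.toLp 2 (fun i => -(C₁ * s ^ (β - 1)) * w i) with hg_def
  have hsum2 : ∀ v : EuclideanSpace ℝ (Fin n),
      ∑ l, 2 * y x l * (∑ i, Q i l * v i) = ∑ i, 2 * w i * v i := by
    intro v
    calc ∑ l, 2 * y x l * (∑ i, Q i l * v i)
        = ∑ l, ∑ i, 2 * y x l * (Q i l * v i) := by
          refine Finset.sum_congr rfl fun l _ => ?_
          rw [Finset.mul_sum Finset.univ (fun i => Q i l * v i) (2 * y x l)]
      _ = ∑ i, ∑ l, 2 * y x l * (Q i l * v i) := Finset.sum_comm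
      _ = ∑ i, 2 * w i * v i := by
          refine Finset.sum_congr rfl fun i _ => ?_
          rw [hw_def, Finset.mul_sum Finset.univ (fun l => Q i l * y x l) 2, Finset.sum_mul]
          exact Finset.sum_congr rfl fun l _ => by ring
  have hgrad : gradient u x = g := by
    have hfd := hud x hg0
    have hga : HasGradientAt u g x := by
      rw [hasGradientAt_iff_hasFDerivAt]
      refine hfd.congr_fderiv ?_
      symm
      apply ContinuousLinearMap.ext
      intro v
      rw [InnerProductSpace.toDual_apply_apply]
      simp only [ContinuousLinearMap.smul_apply, ContinuousLinearMap.coe_sum',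
        Finset.sum_apply, smul_eq_mul, hL, hqx]
      rw [PiLp.inner_apply]
      simp only [RCLike.inner_apply, conj_trivial]
      rw [hsum2 v]
      simp only [hg_def, PiLp.toLp_apply]
      rw [Finset.mul_sum Finset.univ (fun i => 2 * w i * v i) (C₁ * (-(1/2) * s ^ (β - 1)))]
      exact Finset.sum_congr rfl fun i _ => by ring
    exact hga.gradient
  have hgn : ‖g‖ = C₁ * s ^ (β - 1/2) := by
    rw [EuclideanSpace.norm_eq]
    have h1 : ∑ i, ‖g i‖ ^ 2 = (C₁ * s ^ (β - 1/2)) ^ 2 := by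
      have e : ∀ i : Fin n, ‖g i‖ ^ 2 = (C₁ * s ^ (β - 1)) ^ 2 * w i ^ 2 := by
        intro i
        simp only [hg_def, PiLp.toLp_apply]
        rw [Real.norm_eq_abs, sq_abs]
        ring
      rw [Finset.sum_congr rfl fun i _ => e i, ← Finset.mul_sum, hw2]
      rw [mul_pow, mul_pow, sq (s ^ (β - 1)), sq (s ^ (β - 1/2)), hrw, hrw, mul_assoc,
        hmul1]
      rw [show β - 1 + (β - 1) + 1 = β - 1/2 + (β - 1/2) from by ring]
    rw [h1, Real.sqrt_sq (mul_nonneg hC₁ (Real.rpow_nonneg hspos.le _))]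
  have hlapl : lapl u x = C₁ * s ^ (β - 1) * (2 * (1 - β) - k) := by
    have hdiag : ∑ i, ∑ l, Q i l * Q i l = (k : ℝ) := by
      rw [Finset.sum_comm]
      calc ∑ l : Fin k, ∑ i, Q i l * Q i l = ∑ l : Fin k, (1:ℝ) :=
            Finset.sum_congr rfl fun l _ => by rw [hQe l l]; simp
        _ = k := by simp
    simp only [lapl]
    rw [Finset.sum_congr rfl fun i (_ : i ∈ Finset.univ) => hhess i i]
    rw [Finset.sum_sub_distrib]
    have e1 : ∑ i, 2 * C₁ * (1 - β) * s ^ (β - 2) * w i * w i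
        = 2 * C₁ * (1 - β) * s ^ (β - 2) * s := by
      rw [Finset.sum_congr rfl fun i (_ : i ∈ Finset.univ) =>
        show 2 * C₁ * (1 - β) * s ^ (β - 2) * w i * w i
          = 2 * C₁ * (1 - β) * s ^ (β - 2) * w i ^ 2 from by ring,
        ← Finset.mul_sum, hw2]
    have e2 : ∑ i, C₁ * s ^ (β - 1) * ∑ l, Q i l * Q i l = C₁ * s ^ (β - 1) * k := by
      rw [← Finset.mul_sum, hdiag]
    rw [e1, e2, mul_assoc (2 * C₁ * (1 - β)) (s ^ (β - 2)) s, hmul1,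
      show β - 2 + 1 = β - 1 from by ring]
    ring
  have hqf : quadForm (hess u x) g = C₁ ^ 3 * s ^ (3 * β - 2) * (1 - 2 * β) := by
    rw [hquad g]
    have h1 : ∑ i, w i * g i = -(C₁ * s ^ (β - 1)) * s := by
      have e : ∀ i : Fin n, w i * g i = -(C₁ * s ^ (β - 1)) * w i ^ 2 := by
        intro i; simp only [hg_def, PiLp.toLp_apply]; ring
      rw [Finset.sum_congr rfl fun i _ => e i, ← Finset.mul_sum, hw2]
    have h2 : ∑ l, (∑ i, Q i l * g i) ^ 2 = (C₁ * s ^ (β - 1)) ^ 2 * s := by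
      have e : ∀ l, (∑ i, Q i l * g i) = -(C₁ * s ^ (β - 1)) * y x l := by
        intro l
        have e2 : ∀ i : Fin n, Q i l * g i = -(C₁ * s ^ (β - 1)) * (Q i l * w i) := by
          intro i; simp only [hg_def, PiLp.toLp_apply]; ring
        rw [Finset.sum_congr rfl fun i _ => e2 i, ← Finset.mul_sum, hQw l]
      rw [Finset.sum_congr rfl fun l (_ : l ∈ Finset.univ) => by rw [e l, mul_pow],
        ← Finset.mul_sum, hys]
      ring
    rw [h1, h2]
    have k1 : s ^ (β - 2) * (s ^ (β - 1) * s) ^ 2 = s ^ (3 * β - 2) := by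
      rw [hmul1, sq, hrw, hrw, show β - 2 + (β - 1 + 1 + (β - 1 + 1)) = 3 * β - 2 from by ring]
    have k2 : s ^ (β - 1) * ((s ^ (β - 1)) ^ 2 * s) = s ^ (3 * β - 2) := by
      rw [sq, hrw, hmul1, hrw, show β - 1 + (β - 1 + (β - 1) + 1) = 3 * β - 2 from by ring]
    calc 2 * C₁ * (1 - β) * s ^ (β - 2) * (-(C₁ * s ^ (β - 1)) * s) ^ 2
          - C₁ * s ^ (β - 1) * ((C₁ * s ^ (β - 1)) ^ 2 * s)
        = 2 * C₁ ^ 3 * (1 - β) * (s ^ (β - 2) * (s ^ (β - 1) * s) ^ 2)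
          - C₁ ^ 3 * (s ^ (β - 1) * ((s ^ (β - 1)) ^ 2 * s)) := by ring
      _ = C₁ ^ 3 * s ^ (3 * β - 2) * (1 - 2 * β) := by rw [k1, k2]; ring
  obtain ⟨m, hm_def⟩ : ∃ m : EuclideanSpace ℝ (Fin n),
      m = WithLp.toLp 2 (fun i => s ^ (-(1/2) : ℝ) * w i) := ⟨_, rfl⟩
  have hmi : ∀ i, m i = s ^ (-(1/2) : ℝ) * w i := fun i => by rw [hm_def]
  have hmn : ‖m‖ = 1 := by
    rw [EuclideanSpace.norm_eq]
    have e : ∀ i : Fin n, ‖m i‖ ^ 2 = (s ^ (-(1/2):ℝ)) ^ 2 * w i ^ 2 := by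
      intro i; rw [hmi i, Real.norm_eq_abs, sq_abs]; ring
    rw [Finset.sum_congr rfl fun i _ => e i, ← Finset.mul_sum, hw2, sq, hrw, hmul1,
      show -(1/2) + -(1/2) + 1 = (0:ℝ) from by norm_num, Real.rpow_zero, Real.sqrt_one]
  have hmq : quadForm (hess u x) m = C₁ * s ^ (β - 1) * (1 - 2 * β) := by
    rw [hquad]
    have h1 : ∑ i, w i * m i = s ^ (-(1/2):ℝ) * s := by
      have e : ∀ i : Fin n, w i * m i = s ^ (-(1/2):ℝ) * w i ^ 2 :=
        fun i => by rw [hmi i]; ring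
      rw [Finset.sum_congr rfl fun i _ => e i, ← Finset.mul_sum, hw2]
    have h2 : ∑ l, (∑ i, Q i l * m i) ^ 2 = (s ^ (-(1/2):ℝ)) ^ 2 * s := by
      have e : ∀ l, (∑ i, Q i l * m i) = s ^ (-(1/2):ℝ) * y x l := by
        intro l
        have e2 : ∀ i : Fin n, Q i l * m i
            = s ^ (-(1/2):ℝ) * (Q i l * w i) := fun i => by rw [hmi i]; ring
        rw [Finset.sum_congr rfl fun i _ => e2 i, ← Finset.mul_sum, hQw l]
      rw [Finset.sum_congr rfl fun l (_ : l ∈ Finset.univ) => by rw [e l, mul_pow],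
        ← Finset.mul_sum, hys]
    rw [h1, h2]
    have k3 : s ^ (β - 2) * (s ^ (-(1/2):ℝ) * s) ^ 2 = s ^ (β - 1) := by
      rw [hmul1, sq, hrw, hrw, show β - 2 + (-(1/2) + 1 + (-(1/2) + 1)) = β - 1 from by ring]
    have k4 : s ^ (β - 1) * ((s ^ (-(1/2):ℝ)) ^ 2 * s) = s ^ (β - 1) := by
      rw [sq, hrw, hmul1, hrw, show β - 1 + (-(1/2) + -(1/2) + 1) = β - 1 from by ring]
    calc 2 * C₁ * (1 - β) * s ^ (β - 2) * (s ^ (-(1/2):ℝ) * s) ^ 2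
          - C₁ * s ^ (β - 1) * ((s ^ (-(1/2):ℝ)) ^ 2 * s)
        = 2 * C₁ * (1 - β) * (s ^ (β - 2) * (s ^ (-(1/2):ℝ) * s) ^ 2)
          - C₁ * (s ^ (β - 1) * ((s ^ (-(1/2):ℝ)) ^ 2 * s)) := by ring
      _ = C₁ * s ^ (β - 1) * (1 - 2 * β) := by rw [k3, k4]; ring
  have hlam : lamMax (hess u x) = C₁ * s ^ (β - 1) * (1 - 2 * β) := by
    have hgt : IsGreatest
        {r : ℝ | ∃ z : EuclideanSpace ℝ (Fin n), ‖z‖ = 1 ∧ r = quadForm (hess u x) z}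
        (C₁ * s ^ (β - 1) * (1 - 2 * β)) := by
      constructor
      · exact ⟨_, hmn, hmq.symm⟩
      · rintro r ⟨z, hz, rfl⟩
        rw [hquad z]
        have hz2 : ∑ i, z i ^ 2 = 1 := by
          rw [EuclideanSpace.norm_eq] at hz
          have h := Real.sqrt_eq_one.mp hz
          calc ∑ i, z i ^ 2 = ∑ i, ‖z i‖ ^ 2 :=
              Finset.sum_congr rfl fun i _ => by rw [Real.norm_eq_abs, sq_abs]
            _ = 1 := h
        set t := ∑ i, w i * z i with ht_def
        set zM := ∑ l, (∑ i, Q i l * z i) ^ 2 with hzM_def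
        have ht2 : t ^ 2 ≤ s := by
          have h := Finset.sum_mul_sq_le_sq_mul_sq Finset.univ w z
          rw [hw2, hz2, ← ht_def] at h
          simpa using h
        have ht1 : t ^ 2 ≤ s * zM := by
          have hteq : t = ∑ l, y x l * (∑ i, Q i l * z i) := by
            rw [ht_def]
            calc ∑ i, w i * z i
                = ∑ i, ∑ l, Q i l * y x l * z i := by
                  refine Finset.sum_congr rfl fun i _ => ?_
                  rw [hw_def, Finset.sum_mul]
              _ = ∑ l, ∑ i, Q i l * y x l * z i := Finset.sum_comm
              _ = ∑ l, y x l * (∑ i, Q i l * z i) := by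
                  refine Finset.sum_congr rfl fun l _ => ?_
                  rw [Finset.mul_sum Finset.univ (fun i => Q i l * z i) (y x l)]
                  exact Finset.sum_congr rfl fun i _ => by ring
          have h := Finset.sum_mul_sq_le_sq_mul_sq Finset.univ (fun l => y x l)
            (fun l => ∑ i, Q i l * z i)
          rw [← hteq, hys, ← hzM_def] at h
          exact h
        have hb0 : (0:ℝ) ≤ 1 - 2 * β := by linarith
        have h5 : 2 * (1 - β) * t ^ 2 - s * zM ≤ s * (1 - 2 * β) := by
          nlinarith [mul_nonneg hb0 (by linarith : (0:ℝ) ≤ s - t ^ 2)]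
        have hsm : s ^ (β - 2) * s = s ^ (β - 1) := by
          rw [hmul1, show β - 2 + 1 = β - 1 from by ring]
        have hP : 0 ≤ C₁ * s ^ (β - 2) := mul_nonneg hC₁ (Real.rpow_nonneg hspos.le _)
        calc 2 * C₁ * (1 - β) * s ^ (β - 2) * t ^ 2 - C₁ * s ^ (β - 1) * zM
            = C₁ * s ^ (β - 2) * (2 * (1 - β) * t ^ 2 - s * zM) := by rw [← hsm]; ring
          _ ≤ C₁ * s ^ (β - 2) * (s * (1 - 2 * β)) := mul_le_mul_of_nonneg_left h5 hP
          _ = C₁ * s ^ (β - 1) * (1 - 2 * β) := by rw [← hsm]; ring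
    simp only [lamMax]
    exact hgt.csSup_eq
  exact ⟨hlam, hlapl, by rw [hgrad]; exact hgn, by rw [hgrad]; exact hqf⟩

lemma finish_fin {n : ℕ} (p : ℝ≥0∞) (hpt : p ≠ ⊤)
    (β s C₁ : ℝ) (k : ℕ) (hspos : 0 < s) (hC₁ : 0 ≤ C₁)
    (hid : (p.toReal - 2) * (1 - 2 * β) + (2 * (1 - β) - k) = 0)
    (u : EuclideanSpace ℝ (Fin n) → ℝ) (x : EuclideanSpace ℝ (Fin n))
    (h1 : lamMax (hess u x) = C₁ * s ^ (β - 1) * (1 - 2 * β))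
    (h2 : lapl u x = C₁ * s ^ (β - 1) * (2 * (1 - β) - k))
    (h3 : ‖gradient u x‖ = C₁ * s ^ (β - 1/2))
    (h4 : quadForm (hess u x) (gradient u x) = C₁ ^ 3 * s ^ (3 * β - 2) * (1 - 2 * β)) :
    Dop p u x = 0 ∧ DeltaOp p u x = 0 := by
  constructor
  · unfold Dop
    rw [if_neg hpt, h1, h2]
    linear_combination (C₁ * s ^ (β - 1)) * hid
  · unfold DeltaOp
    rw [if_neg hpt, h2, h3, h4]
    rcases eq_or_lt_of_le hC₁ with hC0 | hC0
    · rw [← hC0]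
      simp
    · have hN : 0 < C₁ * s ^ (β - 1/2) := mul_pos hC0 (Real.rpow_pos_of_pos hspos _)
      have key : (C₁ * s ^ (β - 1/2)) ^ (p.toReal - 4) * (C₁ ^ 3 * s ^ (3 * β - 2))
          = (C₁ * s ^ (β - 1/2)) ^ (p.toReal - 2) * (C₁ * s ^ (β - 1)) := by
        have e1 : (C₁ * s ^ (β - 1/2)) ^ (p.toReal - 2)
            = (C₁ * s ^ (β - 1/2)) ^ (p.toReal - 4) * (C₁ * s ^ (β - 1/2)) ^ (2:ℝ) := by
          rw [← Real.rpow_add hN, show p.toReal - 4 + 2 = p.toReal - 2 from by ring]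
        rw [e1]
        have e2 : (C₁ * s ^ (β - 1/2)) ^ (2:ℝ) = C₁ ^ 2 * (s ^ (β - 1/2)) ^ (2:ℕ) := by
          rw [show ((2:ℝ)) = ((2:ℕ):ℝ) from by norm_num, Real.rpow_natCast, mul_pow]
        rw [e2]
        have e3 : (s ^ (β - 1/2)) ^ (2:ℕ) * s ^ (β - 1) = s ^ (3 * β - 2) := by
          rw [sq, ← Real.rpow_add hspos, ← Real.rpow_add hspos,
            show β - 1/2 + (β - 1/2) + (β - 1) = 3 * β - 2 from by ring]
        calc (C₁ * s ^ (β - 1/2)) ^ (p.toReal - 4) * (C₁ ^ 3 * s ^ (3 * β - 2))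
            = (C₁ * s ^ (β - 1/2)) ^ (p.toReal - 4)
              * (C₁ ^ 3 * ((s ^ (β - 1/2)) ^ (2:ℕ) * s ^ (β - 1))) := by rw [e3]
          _ = (C₁ * s ^ (β - 1/2)) ^ (p.toReal - 4) * (C₁ ^ 2 * (s ^ (β - 1/2)) ^ (2:ℕ))
              * (C₁ * s ^ (β - 1)) := by ring
      linear_combination ((C₁ * s ^ (β - 1/2)) ^ (p.toReal - 2) * (C₁ * s ^ (β - 1))) * hid
        + ((p.toReal - 2) * (1 - 2 * β)) * key

/-- Cylindrical fundamental solutions are dominative p-harmonic. -/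
theorem stmt_4 {n k : ℕ} (hn : 2 ≤ n) (hk1 : 1 ≤ k) (hkn : k ≤ n)
    (p : ℝ≥0∞) (hp : 2 ≤ p)
    (Q : Matrix (Fin n) (Fin k) ℝ) (hQ : Qᵀ * Q = 1)
    (x₀ : EuclideanSpace ℝ (Fin n))
    (C₁ C₂ : ℝ) (hC₁ : 0 ≤ C₁)
    (u : EuclideanSpace ℝ (Fin n) → ℝ)
    (hu : ∀ x, u x = C₁ * Wfun p k (enorm' (Qᵀ.mulVec fun i => x i - x₀ i)) + C₂) :
    ∀ x : EuclideanSpace ℝ (Fin n), (Qᵀ.mulVec fun i => x i - x₀ i) ≠ 0 →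
      Dop p u x = 0 ∧ DeltaOp p u x = 0 := by
  intro x hx
  have hmv : ∀ (x' : EuclideanSpace ℝ (Fin n)),
      (Qᵀ.mulVec fun i => x' i - x₀ i) = fun l => ∑ i, Q i l * (x' i - x₀ i) := by
    intro x'
    funext l
    simp [Matrix.mulVec, dotProduct, Matrix.transpose_apply]
  set s := ∑ l, (∑ i, Q i l * (x i - x₀ i)) ^ 2 with hs_def
  have hspos : 0 < s := by
    have hvz : ∃ l, (∑ i, Q i l * (x i - x₀ i)) ≠ 0 := by
      by_contra h
      push_neg at h
      exact hx (by rw [hmv x]; funext l; simpa using h l)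
    obtain ⟨l0, hl0⟩ := hvz
    have h0 : 0 < (∑ i, Q i l0 * (x i - x₀ i)) ^ 2 := by positivity
    rw [hs_def]
    exact Finset.sum_pos' (fun l _ => sq_nonneg _) ⟨l0, Finset.mem_univ l0, h0⟩
  have henorm : ∀ x' : EuclideanSpace ℝ (Fin n),
      enorm' (Qᵀ.mulVec fun i => x' i - x₀ i)
      = Real.sqrt (∑ l, (∑ i, Q i l * (x' i - x₀ i)) ^ 2) := by
    intro x'
    rw [hmv x']
    simp [enorm']
  have hSnn : ∀ x' : EuclideanSpace ℝ (Fin n),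
      (0:ℝ) ≤ ∑ l, (∑ i, Q i l * (x' i - x₀ i)) ^ 2 :=
    fun x' => Finset.sum_nonneg fun l _ => sq_nonneg _
  by_cases hA : p = ⊤ ∨ k = 1
  · -- case: p = ∞ or k = 1, β = 1/2, f = -√
    have hfA : ∀ t : ℝ, 0 < t →
        HasDerivAt (fun r : ℝ => -Real.sqrt r) (-(1/2) * t ^ ((1/2:ℝ) - 1)) t := by
      intro t ht
      have h := (Real.hasDerivAt_sqrt ht.ne').neg
      refine h.congr_deriv ?_
      symm
      rw [show ((1:ℝ)/2 - 1) = -(1/2) from by norm_num, Real.rpow_neg ht.le,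
        Real.sqrt_eq_rpow]
      field_simp
    have huA : ∀ x' : EuclideanSpace ℝ (Fin n), u x' = C₁ *
        (fun r : ℝ => -Real.sqrt r) (∑ l, (∑ i, Q i l * (x' i - x₀ i)) ^ 2) + C₂ := by
      intro x'
      rw [hu x', henorm x']
      simp only [Wfun, if_pos hA]
    obtain ⟨hlam, hlapl, hgn, hqf⟩ := cyl_key Q hQ x₀ C₁ C₂ hC₁ u _ (1/2)
      (le_refl _) hfA huA x s hs_def hspos
    by_cases hpt : p = ⊤
    · constructor
      · unfold Dop; rw [if_pos hpt, hlam]; norm_num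
      · unfold DeltaOp; rw [if_pos hpt, hqf]; norm_num
    · have hk1' : k = 1 := hA.resolve_left hpt
      refine finish_fin p hpt (1/2) s C₁ k hspos hC₁ ?_ u x hlam hlapl hgn hqf
      rw [hk1']
      norm_num
  · obtain ⟨hpt, hkne⟩ := not_or.mp hA
    have hpr2 : (2:ℝ) ≤ p.toReal := by
      have h2 : ((2:ℝ≥0∞)).toReal = (2:ℝ) := by simp
      rw [← h2]
      exact ENNReal.toReal_mono hpt hp
    have hk2 : 2 ≤ k := by omega
    have hk2r : (2:ℝ) ≤ (k:ℝ) := by exact_mod_cast hk2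
    by_cases hpk : p.toReal = (k:ℝ)
    · -- case p = k : β = 0, f = -(1/2) log
      have hfB : ∀ t : ℝ, 0 < t →
          HasDerivAt (fun r : ℝ => -(1/2) * Real.log r) (-(1/2) * t ^ ((0:ℝ) - 1)) t := by
        intro t ht
        have h := (Real.hasDerivAt_log ht.ne').const_mul (-(1/2) : ℝ)
        refine h.congr_deriv ?_
        symm
        rw [show ((0:ℝ) - 1) = -1 from by ring, Real.rpow_neg_one]
      have huB : ∀ x' : EuclideanSpace ℝ (Fin n), u x' = C₁ *
          (fun r : ℝ => -(1/2) * Real.log r)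
            (∑ l, (∑ i, Q i l * (x' i - x₀ i)) ^ 2) + C₂ := by
        intro x'
        rw [hu x', henorm x']
        have e : Wfun p k (Real.sqrt (∑ l, (∑ i, Q i l * (x' i - x₀ i)) ^ 2))
            = -(1/2) * Real.log (∑ l, (∑ i, Q i l * (x' i - x₀ i)) ^ 2) := by
          simp only [Wfun, if_neg hA, if_pos hpk]
          rw [Real.log_sqrt (hSnn x')]
          ring
        rw [e]
      obtain ⟨hlam, hlapl, hgn, hqf⟩ := cyl_key Q hQ x₀ C₁ C₂ hC₁ u _ (0:ℝ)
        (by norm_num) hfB huB x s hs_def hspos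
      refine finish_fin p hpt 0 s C₁ k hspos hC₁ ?_ u x hlam hlapl hgn hqf
      rw [hpk]
      ring
    · -- general case
      have hpr1 : p.toReal - 1 ≠ 0 := by linarith
      have hprk : p.toReal - (k:ℝ) ≠ 0 := sub_ne_zero.mpr hpk
      have hβle : (p.toReal - (k:ℝ)) / (2 * (p.toReal - 1)) ≤ 1/2 := by
        rw [div_le_iff₀ (by linarith : (0:ℝ) < 2 * (p.toReal - 1))]
        have : (1:ℝ) ≤ (k:ℝ) := by exact_mod_cast hk1
        linarith
      have hcb : ((p.toReal - 1)/(p.toReal - (k:ℝ)))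
          * ((p.toReal - (k:ℝ)) / (2 * (p.toReal - 1))) = 1/2 := by
        field_simp
      have hfC : ∀ t : ℝ, 0 < t →
          HasDerivAt (fun r : ℝ => -((p.toReal - 1)/(p.toReal - (k:ℝ)))
              * r ^ ((p.toReal - (k:ℝ)) / (2 * (p.toReal - 1))))
            (-(1/2) * t ^ ((p.toReal - (k:ℝ)) / (2 * (p.toReal - 1)) - 1)) t := by
        intro t ht
        have h := (Real.hasDerivAt_rpow_const
          (x := t) (p := (p.toReal - (k:ℝ)) / (2 * (p.toReal - 1)))
          (Or.inl ht.ne')).const_mul (-((p.toReal - 1)/(p.toReal - (k:ℝ))))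
        refine h.congr_deriv ?_
        symm
        linear_combination (t ^ ((p.toReal - (k:ℝ)) / (2 * (p.toReal - 1)) - 1)) * hcb
      have huC : ∀ x' : EuclideanSpace ℝ (Fin n), u x' = C₁ *
          (fun r : ℝ => -((p.toReal - 1)/(p.toReal - (k:ℝ)))
              * r ^ ((p.toReal - (k:ℝ)) / (2 * (p.toReal - 1))))
            (∑ l, (∑ i, Q i l * (x' i - x₀ i)) ^ 2) + C₂ := by
        intro x'
        rw [hu x', henorm x']
        have e : Wfun p k (Real.sqrt (∑ l, (∑ i, Q i l * (x' i - x₀ i)) ^ 2))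
            = -((p.toReal - 1)/(p.toReal - (k:ℝ)))
              * (∑ l, (∑ i, Q i l * (x' i - x₀ i)) ^ 2)
                ^ ((p.toReal - (k:ℝ)) / (2 * (p.toReal - 1))) := by
          simp only [Wfun, if_neg hA, if_neg hpk]
          rw [Real.sqrt_eq_rpow,
            ← Real.rpow_mul (hSnn x') (1/2) ((p.toReal - (k:ℝ)) / (p.toReal - 1)),
            show (1/2) * ((p.toReal - (k:ℝ)) / (p.toReal - 1))
              = (p.toReal - (k:ℝ)) / (2 * (p.toReal - 1)) from by field_simp]
        rw [e]
      obtain ⟨hlam, hlapl, hgn, hqf⟩ := cyl_key Q hQ x₀ C₁ C₂ hC₁ u _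
        ((p.toReal - (k:ℝ)) / (2 * (p.toReal - 1))) hβle hfC huC x s hs_def hspos
      refine finish_fin p hpt _ s C₁ k hspos hC₁ ?_ u x hlam hlapl hgn hqf
      field_simp
      ring
end

section
/- (Classification of cylindrical dominative p-harmonic functions.) Let n ≥ 2, 2 < p < ∞ and 2 ≤ k ≤ n. Let u(x) = U(|Qᵀ(x−x₀)|) be a k-cylindrical function with U a C² function on (0,∞), Q an n×k real matrix with QᵀQ = I_k and x₀ ∈ ℝⁿ. If Δ_p u(x) = 0 and D_p u(x) = 0 at every x with Qᵀ(x−x₀) ≠ 0, then u is a k-cylindrical fundamental solution, i.e. there exist C₁ ≥ 0 and C₂ ∈ ℝ with U(r) = C₁·W_{k,p}(r) + C₂ for all r > 0, where W_{k,p}(|x|) = w_{k,p}(x). -/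
open scoped ENNReal
open Filter Matrix

noncomputable section AuxProof

variable {n k : ℕ}

def Tmap (Q : Matrix (Fin n) (Fin k) ℝ) : EuclideanSpace ℝ (Fin n) →L[ℝ] EuclideanSpace ℝ (Fin k) :=
  LinearMap.toContinuousLinearMap (Matrix.toEuclideanLin Qᵀ)

lemma Tmap_apply (Q : Matrix (Fin n) (Fin k) ℝ) (v : EuclideanSpace ℝ (Fin n)) :
    Tmap Q v = Qᵀ.mulVec v := rfl

variable (Q : Matrix (Fin n) (Fin k) ℝ) (x₀ : EuclideanSpace ℝ (Fin n)) (U U₁ U₂ : ℝ → ℝ)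

def yv (x : EuclideanSpace ℝ (Fin n)) : EuclideanSpace ℝ (Fin k) := Tmap Q (x - x₀)

def gfun (x : EuclideanSpace ℝ (Fin n)) : ℝ := ‖yv Q x₀ x‖ ^ 2

def V1 : ℝ → ℝ := fun s => U₁ (Real.sqrt s) / (2 * Real.sqrt s)

def Amap (x : EuclideanSpace ℝ (Fin n)) : EuclideanSpace ℝ (Fin n) →L[ℝ] ℝ :=
  (innerSL ℝ (yv Q x₀ x)).comp (Tmap Q)

def Phi (x : EuclideanSpace ℝ (Fin n)) : EuclideanSpace ℝ (Fin n) →L[ℝ] ℝ :=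
  (2 * V1 U₁ (gfun Q x₀ x)) • Amap Q x₀ x

lemma enorm'_eq (x : EuclideanSpace ℝ (Fin n)) :
    enorm' (Qᵀ.mulVec fun i => x i - x₀ i) = Real.sqrt (gfun Q x₀ x) ∧
    Real.sqrt (gfun Q x₀ x) = ‖yv Q x₀ x‖ := by
  have h2 : Real.sqrt (gfun Q x₀ x) = ‖yv Q x₀ x‖ := by
    rw [gfun, Real.sqrt_sq (norm_nonneg _)]
  refine ⟨?_, h2⟩
  rw [h2, enorm', EuclideanSpace.norm_eq]
  congr 1
  refine Finset.sum_congr rfl fun a _ => ?_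
  rw [Real.norm_eq_abs, sq_abs]
  show ((yv Q x₀ x) a)^2 = _
  rfl
lemma u_eq (u : EuclideanSpace ℝ (Fin n) → ℝ)
    (hu : ∀ x, u x = U (enorm' (Qᵀ.mulVec fun i => x i - x₀ i))) (x : EuclideanSpace ℝ (Fin n)) :
    u x = U (Real.sqrt (gfun Q x₀ x)) := by
  rw [hu x, (enorm'_eq Q x₀ x).1]

lemma hasFDerivAt_yv (x : EuclideanSpace ℝ (Fin n)) :
    HasFDerivAt (yv Q x₀) (Tmap Q) x := by
  have := ((Tmap Q).hasFDerivAt (x := x)).sub_const (Tmap Q x₀)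
  simp only [← map_sub] at this
  exact this

lemma hasFDerivAt_g (x : EuclideanSpace ℝ (Fin n)) :
    HasFDerivAt (gfun Q x₀) ((2:ℝ) • Amap Q x₀ x) x := by
  have h := (hasFDerivAt_yv Q x₀ x).norm_sq
  have h2 : ((2:ℕ) • ((innerSL ℝ) (yv Q x₀ x)).comp (Tmap Q)) = ((2:ℝ) • Amap Q x₀ x) := by
    rw [Amap, ← Nat.cast_smul_eq_nsmul ℝ]; norm_num
  rw [h2] at h; exact h

lemma hasFDerivAt_u (u : EuclideanSpace ℝ (Fin n) → ℝ)
    (hu : ∀ x, u x = U (enorm' (Qᵀ.mulVec fun i => x i - x₀ i)))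
    (hU1 : ∀ s, 0 < s → HasDerivAt U (U₁ s) s)
    {x : EuclideanSpace ℝ (Fin n)} (hx : yv Q x₀ x ≠ 0) :
    HasFDerivAt u (Phi Q x₀ U₁ x) x := by
  have hN : 0 < ‖yv Q x₀ x‖ := norm_pos_iff.2 hx
  have hg : 0 < gfun Q x₀ x := by rw [gfun]; positivity
  have hsq : Real.sqrt (gfun Q x₀ x) = ‖yv Q x₀ x‖ := (enorm'_eq Q x₀ x).2
  have hV : HasDerivAt (fun s => U (Real.sqrt s))
      (U₁ (Real.sqrt (gfun Q x₀ x)) * (1 / (2 * Real.sqrt (gfun Q x₀ x)))) (gfun Q x₀ x) := by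
    have h1 : HasDerivAt Real.sqrt (1 / (2 * Real.sqrt (gfun Q x₀ x))) (gfun Q x₀ x) :=
      Real.hasDerivAt_sqrt hg.ne'
    have h2 : HasDerivAt U (U₁ (Real.sqrt (gfun Q x₀ x))) (Real.sqrt (gfun Q x₀ x)) :=
      hU1 _ (by rw [hsq]; exact hN)
    exact h2.comp _ h1
  have := hV.comp_hasFDerivAt x (hasFDerivAt_g Q x₀ x)
  have heq : u = fun x => U (Real.sqrt (gfun Q x₀ x)) := funext (u_eq Q x₀ U u hu)
  simp only [Function.comp_def] at this
  rw [← heq] at this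
  have hscal : (U₁ (Real.sqrt (gfun Q x₀ x)) * (1 / (2 * Real.sqrt (gfun Q x₀ x)))) * 2
      = 2 * V1 U₁ (gfun Q x₀ x) := by rw [V1]; ring
  rw [smul_smul, hscal] at this
  exact this

lemma Tmap_coord (v : EuclideanSpace ℝ (Fin n)) (a : Fin k) :
    Tmap Q v a = ∑ i, Q i a * v i := by
  rw [Tmap_apply]
  simp [Matrix.mulVec, dotProduct, Matrix.transpose_apply]

lemma QtQ (hQ : Qᵀ * Q = 1) (a b : Fin k) :
    ∑ i, Q i a * Q i b = if a = b then 1 else 0 := by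
  have : (Qᵀ * Q) a b = (1 : Matrix (Fin k) (Fin k) ℝ) a b := by rw [hQ]
  rw [Matrix.mul_apply, Matrix.one_apply] at this
  simpa [Matrix.transpose_apply] using this

def qcol (a0 : Fin k) : EuclideanSpace ℝ (Fin n) := (WithLp.equiv 2 (Fin n → ℝ)).symm (fun i => Q i a0)

lemma qcol_apply (a0 : Fin k) (i : Fin n) : qcol Q a0 i = Q i a0 := rfl

def xr (a0 : Fin k) (r : ℝ) : EuclideanSpace ℝ (Fin n) := x₀ + r • qcol Q a0

lemma yv_xr (hQ : Qᵀ * Q = 1) (a0 : Fin k) (r : ℝ) :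
    yv Q x₀ (xr Q x₀ a0 r) = r • EuclideanSpace.single a0 1 := by
  rw [yv, xr, add_sub_cancel_left, _root_.map_smul]
  congr 1
  ext a
  rw [Tmap_coord]
  simp only [qcol_apply, EuclideanSpace.single_apply]
  rw [QtQ Q hQ a a0]

lemma Tmap_basis (i : Fin n) (a : Fin k) :
    Tmap Q (EuclideanSpace.single i 1) a = Q i a := by
  rw [Tmap_coord]
  simp [EuclideanSpace.single_apply]

def Bmap : EuclideanSpace ℝ (Fin k) →L[ℝ] (EuclideanSpace ℝ (Fin n) →L[ℝ] ℝ) :=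
  ((ContinuousLinearMap.compL ℝ (EuclideanSpace ℝ (Fin n)) (EuclideanSpace ℝ (Fin k)) ℝ).flip
    (Tmap Q)).comp (innerSL ℝ)

lemma Bmap_apply (v : EuclideanSpace ℝ (Fin k)) (w : EuclideanSpace ℝ (Fin n)) :
    Bmap Q v w = (inner ℝ v (Tmap Q w) : ℝ) := rfl

lemma Amap_eq (x : EuclideanSpace ℝ (Fin n)) : Amap Q x₀ x = Bmap Q (yv Q x₀ x) := rfl

lemma hasFDerivAt_A (x : EuclideanSpace ℝ (Fin n)) :
    HasFDerivAt (Amap Q x₀) ((Bmap Q).comp (Tmap Q)) x := by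
  have h := ((Bmap Q).hasFDerivAt (x := yv Q x₀ x)).comp x (hasFDerivAt_yv Q x₀ x)
  exact h

lemma hasDerivAt_V1 {s : ℝ} (hs : 0 < s)
    (h2 : HasDerivAt U₁ (U₂ (Real.sqrt s)) (Real.sqrt s)) :
    HasDerivAt (V1 U₁)
      ((U₂ (Real.sqrt s) * (1 / (2 * Real.sqrt s)) * (2 * Real.sqrt s)
        - U₁ (Real.sqrt s) * (2 * (1 / (2 * Real.sqrt s)))) / (2 * Real.sqrt s) ^ 2) s := by
  have hsq : 0 < Real.sqrt s := Real.sqrt_pos.2 hs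
  have hf : HasDerivAt (fun t => U₁ (Real.sqrt t)) (U₂ (Real.sqrt s) * (1 / (2 * Real.sqrt s))) s :=
    h2.comp s (Real.hasDerivAt_sqrt hs.ne')
  have hgd : HasDerivAt (fun t => 2 * Real.sqrt t) (2 * (1 / (2 * Real.sqrt s))) s :=
    (Real.hasDerivAt_sqrt hs.ne').const_mul 2
  exact hf.div hgd (by positivity)

lemma hasFDerivAt_Phi {x : EuclideanSpace ℝ (Fin n)} (hx : yv Q x₀ x ≠ 0)
    (hU2 : HasDerivAt U₁ (U₂ (Real.sqrt (gfun Q x₀ x))) (Real.sqrt (gfun Q x₀ x))) :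
    HasFDerivAt (Phi Q x₀ U₁)
      ((2 * V1 U₁ (gfun Q x₀ x)) • ((Bmap Q).comp (Tmap Q)) +
        ((2 * ((U₂ (Real.sqrt (gfun Q x₀ x)) * (1 / (2 * Real.sqrt (gfun Q x₀ x))) * (2 * Real.sqrt (gfun Q x₀ x))
        - U₁ (Real.sqrt (gfun Q x₀ x)) * (2 * (1 / (2 * Real.sqrt (gfun Q x₀ x))))) / (2 * Real.sqrt (gfun Q x₀ x)) ^ 2)) •
          ((2:ℝ) • Amap Q x₀ x)).smulRight (Amap Q x₀ x)) x := by
  have hg : 0 < gfun Q x₀ x := by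
    rw [gfun]; have : 0 < ‖yv Q x₀ x‖ := norm_pos_iff.2 hx; positivity
  have hV2 := hasDerivAt_V1 U₁ U₂ hg hU2
  have hc : HasDerivAt (fun t => 2 * V1 U₁ t) (2 * _) (gfun Q x₀ x) := hV2.const_mul 2
  have hs : HasFDerivAt (fun x => 2 * V1 U₁ (gfun Q x₀ x))
      ((2 * ((U₂ (Real.sqrt (gfun Q x₀ x)) * (1 / (2 * Real.sqrt (gfun Q x₀ x))) * (2 * Real.sqrt (gfun Q x₀ x))
        - U₁ (Real.sqrt (gfun Q x₀ x)) * (2 * (1 / (2 * Real.sqrt (gfun Q x₀ x))))) / (2 * Real.sqrt (gfun Q x₀ x)) ^ 2)) •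
          ((2:ℝ) • Amap Q x₀ x)) x :=
    hc.comp_hasFDerivAt x (hasFDerivAt_g Q x₀ x)
  exact hs.smul (hasFDerivAt_A Q x₀ x)

lemma inner_eval {k : ℕ} (v w : EuclideanSpace ℝ (Fin k)) : (inner ℝ v w : ℝ) = ∑ a, v a * w a := by
  simp [PiLp.inner_apply, RCLike.inner_apply, conj_trivial]
  exact Finset.sum_congr rfl fun _ _ => mul_comm _ _

lemma gfun_xr (hQ : Qᵀ * Q = 1) (a0 : Fin k) {r : ℝ} (hr : 0 < r) :
    gfun Q x₀ (xr Q x₀ a0 r) = r ^ 2 := by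
  rw [gfun, yv_xr Q x₀ hQ a0 r, norm_smul, EuclideanSpace.norm_single]
  simp [abs_of_pos hr]

lemma yv_xr_ne (hQ : Qᵀ * Q = 1) (a0 : Fin k) {r : ℝ} (hr : 0 < r) :
    yv Q x₀ (xr Q x₀ a0 r) ≠ 0 := by
  rw [yv_xr Q x₀ hQ a0 r]
  refine smul_ne_zero hr.ne' fun h => ?_
  have h1 : EuclideanSpace.single a0 (1:ℝ) a0 = 0 := by rw [h]; rfl
  simp [EuclideanSpace.single_apply] at h1

lemma hess_eval (hQ : Qᵀ * Q = 1) (a0 : Fin k) (u : EuclideanSpace ℝ (Fin n) → ℝ)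
    (hu : ∀ x, u x = U (enorm' (Qᵀ.mulVec fun i => x i - x₀ i)))
    (hU1 : ∀ s, 0 < s → HasDerivAt U (U₁ s) s)
    (hU2 : ∀ s, 0 < s → HasDerivAt U₁ (U₂ s) s)
    {r : ℝ} (hr : 0 < r) (i j : Fin n) :
    hess u (xr Q x₀ a0 r) i j
      = (U₁ r / r) * (∑ a, Q i a * Q j a) + (U₂ r - U₁ r / r) * (Q i a0 * Q j a0) := by
  have hgr : Real.sqrt (gfun Q x₀ (xr Q x₀ a0 r)) = r := by
    rw [gfun_xr Q x₀ hQ a0 hr, Real.sqrt_sq hr.le]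
  have hyne := yv_xr_ne Q x₀ hQ a0 hr
  have hcont : Continuous (yv Q x₀) :=
    (Tmap Q).continuous.comp (continuous_id.sub continuous_const)
  have hopen : IsOpen {x | yv Q x₀ x ≠ 0} := isOpen_compl_singleton.preimage hcont
  have hev : fderiv ℝ u =ᶠ[nhds (xr Q x₀ a0 r)] Phi Q x₀ U₁ := by
    filter_upwards [hopen.mem_nhds hyne] with x hx
    exact (hasFDerivAt_u Q x₀ U U₁ u hu hU1 hx).fderiv
  have hU2' : HasDerivAt U₁ (U₂ (Real.sqrt (gfun Q x₀ (xr Q x₀ a0 r))))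
      (Real.sqrt (gfun Q x₀ (xr Q x₀ a0 r))) := by rw [hgr]; exact hU2 r hr
  have hΨ := hasFDerivAt_Phi Q x₀ U₁ U₂ hyne hU2'
  have h2 := (hΨ.congr_of_eventuallyEq hev).fderiv
  rw [hess, Matrix.of_apply, iteratedFDeriv_two_apply, h2]
  have hAj : ∀ j : Fin n, Amap Q x₀ (xr Q x₀ a0 r) (EuclideanSpace.single j 1) = r * Q j a0 := by
    intro j
    rw [Amap, ContinuousLinearMap.comp_apply, innerSL_apply_apply, inner_eval, yv_xr Q x₀ hQ a0 r]
    rw [Finset.sum_eq_single a0]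
    · simp [Tmap_basis, EuclideanSpace.single_apply]
    · intro b _ hb
      simp [EuclideanSpace.single_apply, hb]
    · simp
  simp only [Matrix.cons_val_zero, Matrix.cons_val_one, Matrix.head_cons,
    ContinuousLinearMap.add_apply, ContinuousLinearMap.smul_apply,
    ContinuousLinearMap.comp_apply, ContinuousLinearMap.smulRight_apply, Bmap_apply,
    smul_eq_mul, hAj]
  rw [inner_eval]
  simp only [Tmap_basis, hgr, V1]
  field_simp

lemma qcol_norm (hQ : Qᵀ * Q = 1) (a0 : Fin k) : ‖qcol Q a0‖ = 1 := by
  rw [EuclideanSpace.norm_eq]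
  have : ∑ i, ‖qcol Q a0 i‖ ^ 2 = 1 := by
    simp only [qcol_apply, Real.norm_eq_abs, sq_abs, sq]
    simpa using QtQ Q hQ a0 a0
  rw [this, Real.sqrt_one]

lemma gradient_eval (hQ : Qᵀ * Q = 1) (a0 : Fin k) (u : EuclideanSpace ℝ (Fin n) → ℝ)
    (hu : ∀ x, u x = U (enorm' (Qᵀ.mulVec fun i => x i - x₀ i)))
    (hU1 : ∀ s, 0 < s → HasDerivAt U (U₁ s) s)
    {r : ℝ} (hr : 0 < r) :
    gradient u (xr Q x₀ a0 r) = U₁ r • qcol Q a0 := by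
  have hgr : Real.sqrt (gfun Q x₀ (xr Q x₀ a0 r)) = r := by
    rw [gfun_xr Q x₀ hQ a0 hr, Real.sqrt_sq hr.le]
  have hyne := yv_xr_ne Q x₀ hQ a0 hr
  have hF := hasFDerivAt_u Q x₀ U U₁ u hu hU1 hyne
  have hPhi : Phi Q x₀ U₁ (xr Q x₀ a0 r)
      = (InnerProductSpace.toDual ℝ (EuclideanSpace ℝ (Fin n))) (U₁ r • qcol Q a0) := by
    ext w
    rw [InnerProductSpace.toDual_apply_apply]
    rw [Phi, ContinuousLinearMap.smul_apply, Amap, ContinuousLinearMap.comp_apply,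
      innerSL_apply_apply, inner_eval, inner_eval, yv_xr Q x₀ hQ a0 r]
    rw [Finset.sum_eq_single a0 (fun b _ hb => by simp [EuclideanSpace.single_apply, hb]) (by simp)]
    simp only [EuclideanSpace.single_apply, if_pos rfl, if_true, PiLp.smul_apply, smul_eq_mul, mul_one,
      qcol_apply, V1, hgr]
    rw [Tmap_coord, Finset.mul_sum, Finset.mul_sum]
    refine Finset.sum_congr rfl fun i _ => ?_
    field_simp
  rw [hPhi] at hF
  have : HasGradientAt u (U₁ r • qcol Q a0) (xr Q x₀ a0 r) :=
    (hasGradientAt_iff_hasFDerivAt).2 hF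
  exact this.gradient

lemma gradient_norm (hQ : Qᵀ * Q = 1) (a0 : Fin k) (u : EuclideanSpace ℝ (Fin n) → ℝ)
    (hu : ∀ x, u x = U (enorm' (Qᵀ.mulVec fun i => x i - x₀ i)))
    (hU1 : ∀ s, 0 < s → HasDerivAt U (U₁ s) s)
    {r : ℝ} (hr : 0 < r) :
    ‖gradient u (xr Q x₀ a0 r)‖ = |U₁ r| := by
  rw [gradient_eval Q x₀ U U₁ hQ a0 u hu hU1 hr, norm_smul, qcol_norm Q hQ a0]
  simp

lemma quad_formula (a0 : Fin k) (α β : ℝ) (z : EuclideanSpace ℝ (Fin n)) :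
    ∑ i, ∑ j, z i * (α * (∑ a, Q i a * Q j a) + β * (Q i a0 * Q j a0)) * z j
      = α * (∑ a, (∑ i, z i * Q i a) ^ 2) + β * (∑ i, z i * Q i a0) ^ 2 := by
  have e1 : ∀ a : Fin k, (∑ i, z i * Q i a) ^ 2 = ∑ i, ∑ j, (z i * Q i a) * (z j * Q j a) := by
    intro a; rw [sq, Finset.sum_mul_sum]
  have hterm : ∀ i j : Fin n,
      z i * (α * (∑ a, Q i a * Q j a) + β * (Q i a0 * Q j a0)) * z j
        = (∑ a, α * ((z i * Q i a) * (z j * Q j a))) + β * ((z i * Q i a0) * (z j * Q j a0)) := by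
    intro i j
    have h2 : (∑ a, α * ((z i * Q i a) * (z j * Q j a)))
        = α * (z i * z j) * ∑ a, Q i a * Q j a := by
      rw [Finset.mul_sum]
      exact Finset.sum_congr rfl fun a _ => by ring
    rw [h2]; ring
  simp only [hterm]
  simp only [Finset.sum_add_distrib]
  congr 1
  · have h1 : ∀ i : Fin n, ∑ j, ∑ a, α * ((z i * Q i a) * (z j * Q j a))
        = ∑ a : Fin k, ∑ j, α * ((z i * Q i a) * (z j * Q j a)) := fun i => Finset.sum_comm
    simp only [h1]
    rw [Finset.sum_comm]
    simp only [e1, Finset.mul_sum]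
  · rw [sq, Finset.sum_mul_sum]
    simp only [Finset.mul_sum]

def Smap (Q : Matrix (Fin n) (Fin k) ℝ) :
    EuclideanSpace ℝ (Fin k) →L[ℝ] EuclideanSpace ℝ (Fin n) :=
  LinearMap.toContinuousLinearMap (Matrix.toEuclideanLin Q)

lemma Smap_coord (v : EuclideanSpace ℝ (Fin k)) (i : Fin n) :
    Smap Q v i = ∑ a, Q i a * v a := by
  show (Q.mulVec v) i = _
  simp [Matrix.mulVec, dotProduct]

lemma adjoint_eq (z : EuclideanSpace ℝ (Fin n)) (v : EuclideanSpace ℝ (Fin k)) :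
    (inner ℝ (Tmap Q z) v : ℝ) = inner ℝ z (Smap Q v) := by
  rw [inner_eval, inner_eval]
  simp only [Tmap_coord, Smap_coord, Finset.sum_mul, Finset.mul_sum]
  rw [Finset.sum_comm]
  exact Finset.sum_congr rfl fun i _ => Finset.sum_congr rfl fun a _ => by ring

lemma Tmap_Smap (hQ : Qᵀ * Q = 1) (v : EuclideanSpace ℝ (Fin k)) :
    Tmap Q (Smap Q v) = v := by
  ext a
  rw [Tmap_coord]
  simp only [Smap_coord, Finset.mul_sum]
  rw [Finset.sum_comm]
  have : ∀ b : Fin k, ∑ i, Q i a * (Q i b * v b) = (if a = b then 1 else 0) * v b := by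
    intro b
    rw [← QtQ Q hQ a b, Finset.sum_mul]
    exact Finset.sum_congr rfl fun i _ => by ring
  simp only [this, ite_mul, one_mul, zero_mul]
  simp
lemma Tmap_norm_le (hQ : Qᵀ * Q = 1) (z : EuclideanSpace ℝ (Fin n)) :
    ‖Tmap Q z‖ ≤ ‖z‖ := by
  have hS : ∀ v : EuclideanSpace ℝ (Fin k), ‖Smap Q v‖ = ‖v‖ := by
    intro v
    have h1 : (inner ℝ (Smap Q v) (Smap Q v) : ℝ) = inner ℝ v v := by
      rw [← adjoint_eq, Tmap_Smap Q hQ, real_inner_comm]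
    have h2 : ‖Smap Q v‖ ^ 2 = ‖v‖ ^ 2 := by
      rw [← real_inner_self_eq_norm_sq, ← real_inner_self_eq_norm_sq, h1]
    calc ‖Smap Q v‖ = Real.sqrt (‖Smap Q v‖ ^ 2) := (Real.sqrt_sq (norm_nonneg _)).symm
    _ = Real.sqrt (‖v‖ ^ 2) := by rw [h2]
    _ = ‖v‖ := Real.sqrt_sq (norm_nonneg _)
  have h2 : ‖Tmap Q z‖ ^ 2 = (inner ℝ z (Smap Q (Tmap Q z)) : ℝ) := by
    rw [← adjoint_eq, real_inner_self_eq_norm_sq]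
  have h3 : (inner ℝ z (Smap Q (Tmap Q z)) : ℝ) ≤ ‖z‖ * ‖Tmap Q z‖ := by
    calc (inner ℝ z (Smap Q (Tmap Q z)) : ℝ) ≤ ‖z‖ * ‖Smap Q (Tmap Q z)‖ := real_inner_le_norm _ _
    _ = ‖z‖ * ‖Tmap Q z‖ := by rw [hS]
  nlinarith [norm_nonneg (Tmap Q z), norm_nonneg z]

lemma quadForm_hess_eval (hQ : Qᵀ * Q = 1) (a0 : Fin k) (u : EuclideanSpace ℝ (Fin n) → ℝ)
    (hu : ∀ x, u x = U (enorm' (Qᵀ.mulVec fun i => x i - x₀ i)))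
    (hU1 : ∀ s, 0 < s → HasDerivAt U (U₁ s) s)
    (hU2 : ∀ s, 0 < s → HasDerivAt U₁ (U₂ s) s)
    {r : ℝ} (hr : 0 < r) (z : EuclideanSpace ℝ (Fin n)) :
    quadForm (hess u (xr Q x₀ a0 r)) z
      = (U₁ r / r) * (∑ a, (Tmap Q z a) ^ 2) + (U₂ r - U₁ r / r) * (Tmap Q z a0) ^ 2 := by
  rw [quadForm]
  simp only [hess_eval Q x₀ U U₁ U₂ hQ a0 u hu hU1 hU2 hr]
  rw [quad_formula]
  have h : ∀ a, (∑ i, z i * Q i a) = Tmap Q z a := by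
    intro a; rw [Tmap_coord]; exact Finset.sum_congr rfl fun i _ => by ring
  simp only [h]

lemma sum_sq_eq_normsq (w : EuclideanSpace ℝ (Fin k)) : ∑ a, (w a) ^ 2 = ‖w‖ ^ 2 := by
  rw [EuclideanSpace.norm_eq, Real.sq_sqrt (by positivity)]
  exact Finset.sum_congr rfl fun a _ => by rw [Real.norm_eq_abs, sq_abs]

lemma sum_sq_le_one (hQ : Qᵀ * Q = 1) {z : EuclideanSpace ℝ (Fin n)} (hz : ‖z‖ = 1) :
    ∑ a, (Tmap Q z a) ^ 2 ≤ 1 := by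
  rw [sum_sq_eq_normsq]
  have := Tmap_norm_le Q hQ z
  nlinarith [norm_nonneg (Tmap Q z)]

lemma Tmap_qcol (hQ : Qᵀ * Q = 1) (a : Fin k) :
    Tmap Q (qcol Q a) = EuclideanSpace.single a 1 := by
  ext b
  rw [Tmap_coord]
  simp only [qcol_apply, EuclideanSpace.single_apply]
  rw [QtQ Q hQ b a]

lemma quadForm_qcol (hQ : Qᵀ * Q = 1) (a0 a : Fin k) (u : EuclideanSpace ℝ (Fin n) → ℝ)
    (hu : ∀ x, u x = U (enorm' (Qᵀ.mulVec fun i => x i - x₀ i)))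
    (hU1 : ∀ s, 0 < s → HasDerivAt U (U₁ s) s)
    (hU2 : ∀ s, 0 < s → HasDerivAt U₁ (U₂ s) s)
    {r : ℝ} (hr : 0 < r) :
    quadForm (hess u (xr Q x₀ a0 r)) (qcol Q a)
      = (U₁ r / r) + (U₂ r - U₁ r / r) * (if a = a0 then 1 else 0) := by
  rw [quadForm_hess_eval Q x₀ U U₁ U₂ hQ a0 u hu hU1 hU2 hr, Tmap_qcol Q hQ a]
  have h1 : ∑ b, (EuclideanSpace.single a (1:ℝ) b) ^ 2 = 1 := by
    simp [EuclideanSpace.single_apply, Finset.sum_ite_eq', sq]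
  rw [h1, mul_one]
  congr 1
  simp only [EuclideanSpace.single_apply]
  by_cases h : a0 = a <;> simp [h, eq_comm]

lemma lapl_eval (hQ : Qᵀ * Q = 1) (a0 : Fin k) (u : EuclideanSpace ℝ (Fin n) → ℝ)
    (hu : ∀ x, u x = U (enorm' (Qᵀ.mulVec fun i => x i - x₀ i)))
    (hU1 : ∀ s, 0 < s → HasDerivAt U (U₁ s) s)
    (hU2 : ∀ s, 0 < s → HasDerivAt U₁ (U₂ s) s)
    {r : ℝ} (hr : 0 < r) :
    (∑ i, hess u (xr Q x₀ a0 r) i i) = (U₁ r / r) * k + (U₂ r - U₁ r / r) := by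
  simp only [hess_eval Q x₀ U U₁ U₂ hQ a0 u hu hU1 hU2 hr]
  rw [Finset.sum_add_distrib, ← Finset.mul_sum, ← Finset.mul_sum]
  have h1 : ∑ i : Fin n, ∑ a, Q i a * Q i a = (k : ℝ) := by
    rw [Finset.sum_comm]
    have : ∀ a : Fin k, ∑ i, Q i a * Q i a = 1 := by
      intro a; simpa using QtQ Q hQ a a
    simp [this]
  have h2 : ∑ i : Fin n, Q i a0 * Q i a0 = 1 := by simpa using QtQ Q hQ a0 a0
  rw [h1, h2, mul_one]

lemma quadForm_smul {m : ℕ} (A : Matrix (Fin m) (Fin m) ℝ) (c : ℝ) (z : EuclideanSpace ℝ (Fin m)) :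
    quadForm A (c • z) = c ^ 2 * quadForm A z := by
  simp only [quadForm, PiLp.smul_apply, smul_eq_mul, Finset.mul_sum]
  exact Finset.sum_congr rfl fun i _ => Finset.sum_congr rfl fun j _ => by ring

lemma pointwise_ODE (hk : 2 ≤ k) (hQ : Qᵀ * Q = 1) (a0 a1 : Fin k) (ha : a1 ≠ a0)
    (u : EuclideanSpace ℝ (Fin n) → ℝ)
    (hu : ∀ x, u x = U (enorm' (Qᵀ.mulVec fun i => x i - x₀ i)))
    (hU1 : ∀ s, 0 < s → HasDerivAt U (U₁ s) s)
    (hU2 : ∀ s, 0 < s → HasDerivAt U₁ (U₂ s) s)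
    {r : ℝ} (hr : 0 < r) {pR : ℝ} (hpR : 2 < pR)
    (hDelta : |U₁ r| ^ (pR - 2) * (∑ i, hess u (xr Q x₀ a0 r) i i)
      + (pR - 2) * |U₁ r| ^ (pR - 4)
        * quadForm (hess u (xr Q x₀ a0 r)) (U₁ r • qcol Q a0) = 0)
    (hDop : (pR - 2) * lamMax (hess u (xr Q x₀ a0 r))
      + (∑ i, hess u (xr Q x₀ a0 r) i i) = 0) :
    U₁ r ≤ 0 ∧ (pR - 1) * U₂ r + ((k : ℝ) - 1) * (U₁ r / r) = 0 := by
  have hk2 : (2:ℝ) ≤ (k:ℝ) := by exact_mod_cast hk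
  set H := hess u (xr Q x₀ a0 r) with hH
  have hlapl := lapl_eval Q x₀ U U₁ U₂ hQ a0 u hu hU1 hU2 hr
  have hqa0 : quadForm H (qcol Q a0) = U₂ r := by
    rw [hH, quadForm_qcol Q x₀ U U₁ U₂ hQ a0 a0 u hu hU1 hU2 hr, if_pos rfl]; ring
  have hqa1 : quadForm H (qcol Q a1) = U₁ r / r := by
    rw [hH, quadForm_qcol Q x₀ U U₁ U₂ hQ a0 a1 u hu hU1 hU2 hr, if_neg ha]; ring
  set M := max (max (U₂ r) (U₁ r / r)) 0 with hM
  have hub : ∀ z : EuclideanSpace ℝ (Fin n), ‖z‖ = 1 → quadForm H z ≤ M := by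
    intro z hz
    rw [hH, quadForm_hess_eval Q x₀ U U₁ U₂ hQ a0 u hu hU1 hU2 hr z]
    have h1 : (Tmap Q z a0) ^ 2 ≤ ∑ a, (Tmap Q z a) ^ 2 :=
      Finset.single_le_sum (f := fun a => (Tmap Q z a) ^ 2) (fun a _ => sq_nonneg _)
        (Finset.mem_univ a0)
    have h2 : ∑ a, (Tmap Q z a) ^ 2 ≤ 1 := sum_sq_le_one Q hQ hz
    have hM2 : U₂ r ≤ M := (le_max_left _ _).trans (le_max_left _ _)
    have hM1 : U₁ r / r ≤ M := (le_max_right _ _).trans (le_max_left _ _)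
    have hM0 : (0:ℝ) ≤ M := le_max_right _ _
    nlinarith [mul_nonneg (sub_nonneg.2 hM2) (sq_nonneg (Tmap Q z a0)),
      mul_nonneg (sub_nonneg.2 hM1) (sub_nonneg.2 h1),
      mul_nonneg hM0 (sub_nonneg.2 h2)]
  have hbdd : BddAbove {ρ : ℝ | ∃ z : EuclideanSpace ℝ (Fin n), ‖z‖ = 1 ∧ ρ = quadForm H z} := by
    refine ⟨M, fun ρ hρ => ?_⟩
    obtain ⟨z, hz, rfl⟩ := hρ
    exact hub z hz
  have hge : ∀ a : Fin k, quadForm H (qcol Q a) ≤ lamMax H :=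
    fun a => le_csSup hbdd ⟨qcol Q a, qcol_norm Q hQ a, rfl⟩
  have hle : lamMax H ≤ M := by
    refine csSup_le ⟨quadForm H (qcol Q a0), qcol Q a0, qcol_norm Q hQ a0, rfl⟩ fun ρ hρ => ?_
    obtain ⟨z, hz, rfl⟩ := hρ
    exact hub z hz
  have hquadgrad : quadForm H (U₁ r • qcol Q a0) = (U₁ r) ^ 2 * U₂ r := by
    rw [quadForm_smul, hqa0]
  rcases lt_trichotomy (U₁ r) 0 with hneg | hzero | hpos
  · -- U₁ < 0 : bracket from hDelta
    refine ⟨hneg.le, ?_⟩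
    have hm : 0 < |U₁ r| := abs_pos.2 hneg.ne
    have hpow : |U₁ r| ^ (pR - 4) * (U₁ r) ^ 2 = |U₁ r| ^ (pR - 2) := by
      rw [← sq_abs, ← Real.rpow_natCast |U₁ r| 2, ← Real.rpow_add hm]
      congr 1
      push_cast
      ring
    rw [hquadgrad, hlapl] at hDelta
    have hfac : |U₁ r| ^ (pR - 2) * ((pR - 1) * U₂ r + ((k : ℝ) - 1) * (U₁ r / r)) = 0 := by
      rw [← hDelta]
      have : (pR - 2) * |U₁ r| ^ (pR - 4) * ((U₁ r) ^ 2 * U₂ r)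
          = (pR - 2) * (|U₁ r| ^ (pR - 4) * (U₁ r) ^ 2) * U₂ r := by ring
      rw [this, hpow]
      ring
    have hpow2 : (0:ℝ) < |U₁ r| ^ (pR - 2) := Real.rpow_pos_of_pos hm _
    have := mul_eq_zero.1 hfac
    rcases this with h | h
    · exact absurd h hpow2.ne'
    · exact h
  · -- U₁ = 0
    have hfrac : U₁ r / r = 0 := by rw [hzero]; simp
    have hlapl0 : (∑ i, H i i) = U₂ r := by rw [hH, hlapl, hfrac]; ring
    rw [hlapl0] at hDop
    have hgeU2 : U₂ r ≤ lamMax H := hqa0 ▸ hge a0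
    have hge0 : (0:ℝ) ≤ lamMax H := by have := hge a1; rw [hqa1, hfrac] at this; exact this
    have hleM : lamMax H ≤ max (U₂ r) 0 := by
      rw [hM, hfrac] at hle
      simpa [max_assoc, max_self] using hle
    have hU2zero : U₂ r = 0 := by
      rcases le_or_gt (U₂ r) 0 with h | h
      · have : lamMax H ≤ 0 := hleM.trans (by simp [max_eq_right h])
        have hlam0 : lamMax H = 0 := le_antisymm this hge0
        rw [hlam0] at hDop; linarith
      · have : lamMax H ≤ U₂ r := hleM.trans (by simp [max_eq_left h.le])
        have hlam : lamMax H = U₂ r := le_antisymm this hgeU2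
        rw [hlam] at hDop; nlinarith
    exact ⟨hzero.le, by rw [hU2zero, hfrac]; ring⟩
  · -- U₁ > 0 : contradiction
    exfalso
    have hm : 0 < |U₁ r| := abs_pos.2 hpos.ne'
    have hpow : |U₁ r| ^ (pR - 4) * (U₁ r) ^ 2 = |U₁ r| ^ (pR - 2) := by
      rw [← sq_abs, ← Real.rpow_natCast |U₁ r| 2, ← Real.rpow_add hm]
      congr 1
      push_cast
      ring
    rw [hquadgrad, hlapl] at hDelta
    have hfac : |U₁ r| ^ (pR - 2) * ((pR - 1) * U₂ r + ((k : ℝ) - 1) * (U₁ r / r)) = 0 := by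
      rw [← hDelta]
      have : (pR - 2) * |U₁ r| ^ (pR - 4) * ((U₁ r) ^ 2 * U₂ r)
          = (pR - 2) * (|U₁ r| ^ (pR - 4) * (U₁ r) ^ 2) * U₂ r := by ring
      rw [this, hpow]
      ring
    have hpow2 : (0:ℝ) < |U₁ r| ^ (pR - 2) := Real.rpow_pos_of_pos hm _
    have hbr : (pR - 1) * U₂ r + ((k : ℝ) - 1) * (U₁ r / r) = 0 := by
      rcases mul_eq_zero.1 hfac with h | h
      · exact absurd h hpow2.ne'
      · exact h
    have hfracpos : 0 < U₁ r / r := div_pos hpos hr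
    have hU2neg : U₂ r < 0 := by
      have h1 : (0:ℝ) < ((k:ℝ) - 1) * (U₁ r / r) := mul_pos (by linarith) hfracpos
      have h2 : (pR - 1) * U₂ r < 0 := by linarith
      by_contra h
      push_neg at h
      have : 0 ≤ (pR - 1) * U₂ r := mul_nonneg (by linarith) h
      linarith
    have hlam : lamMax H = U₂ r := by
      rw [hlapl] at hDop
      have : (pR - 2) * (lamMax H - U₂ r) = 0 := by linear_combination hDop - hbr
      have h2 : lamMax H - U₂ r = 0 := by
        rcases mul_eq_zero.1 this with h | h
        · linarith
        · exact h
      linarith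
    have : U₁ r / r ≤ lamMax H := hqa1 ▸ hge a1
    rw [hlam] at this
    linarith

lemma eq_of_deriv_zero {f : ℝ → ℝ} (hf : ∀ r, 0 < r → HasDerivAt f 0 r)
    {r : ℝ} (hr : 0 < r) : f r = f 1 := by
  have key : ∀ a b : ℝ, 0 < a → a < b → f a = f b := by
    intro a b ha hab
    have hcont : ContinuousOn f (Set.Icc a b) := fun x hx =>
      (hf x (lt_of_lt_of_le ha hx.1)).continuousAt.continuousWithinAt
    have hder : ∀ x ∈ Set.Ioo a b, HasDerivAt f ((fun _ => (0:ℝ)) x) x :=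
      fun x hx => hf x (ha.trans hx.1)
    obtain ⟨c, _, hceq⟩ := exists_hasDerivAt_eq_slope f (fun _ => (0:ℝ)) hab hcont hder
    rcases div_eq_zero_iff.mp hceq.symm with h | h
    · linarith
    · linarith
  rcases lt_trichotomy r 1 with h | h | h
  · exact key r 1 hr h
  · rw [h]
  · exact (key 1 r one_pos h).symm

lemma hasDerivAt_W {p : ℝ≥0∞} {k : ℕ} (hp' : p ≠ ⊤) (hpR : 2 < p.toReal) (hk : 2 ≤ k)
    {r : ℝ} (hr : 0 < r) :
    HasDerivAt (Wfun p k) (-(r ^ (-(((k:ℝ) - 1) / (p.toReal - 1))))) r := by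
  have hk1 : k ≠ 1 := by omega
  have hbr : ¬(p = ⊤ ∨ k = 1) := by simp [hp', hk1]
  have hW : Wfun p k = fun r => if p.toReal = k then -Real.log r
      else -((p.toReal - 1) / (p.toReal - k)) * r ^ ((p.toReal - k) / (p.toReal - 1)) := by
    funext s; rw [Wfun, if_neg hbr]
  rw [hW]
  by_cases hpk : p.toReal = (k : ℝ)
  · simp only [if_pos hpk]
    have ha : ((k:ℝ) - 1) / (p.toReal - 1) = 1 := by
      have hk2 : (2:ℝ) ≤ (k:ℝ) := by exact_mod_cast hk
      rw [hpk]
      exact div_self (by linarith)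
    rw [ha]
    have := (Real.hasDerivAt_log hr.ne').neg
    rw [Real.rpow_neg_one]
    exact this
  · simp only [if_neg hpk]
    have hne : p.toReal - (k:ℝ) ≠ 0 := sub_ne_zero.2 hpk
    have hne1 : p.toReal - 1 ≠ 0 := by linarith
    have hD := (Real.hasDerivAt_rpow_const (x := r) (p := (p.toReal - k) / (p.toReal - 1))
      (Or.inl hr.ne')).const_mul (-((p.toReal - 1) / (p.toReal - k)))
    refine hD.congr_deriv ?_
    have hexp : (p.toReal - k) / (p.toReal - 1) - 1 = -(((k:ℝ) - 1) / (p.toReal - 1)) := by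
      field_simp
      ring
    rw [hexp]
    field_simp

lemma classify_1d {p : ℝ≥0∞} {k : ℕ} (hp' : p ≠ ⊤) (hpR : 2 < p.toReal) (hk : 2 ≤ k)
    {U U₁ U₂ : ℝ → ℝ}
    (hU1 : ∀ s, 0 < s → HasDerivAt U (U₁ s) s)
    (hU2 : ∀ s, 0 < s → HasDerivAt U₁ (U₂ s) s)
    (hODE : ∀ r, 0 < r → U₁ r ≤ 0 ∧ (p.toReal - 1) * U₂ r + ((k:ℝ) - 1) * (U₁ r / r) = 0) :
    ∃ C₁ C₂ : ℝ, 0 ≤ C₁ ∧ ∀ r : ℝ, 0 < r → U r = C₁ * Wfun p k r + C₂ := by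
  set a : ℝ := ((k:ℝ) - 1) / (p.toReal - 1) with ha
  have hp1 : (0:ℝ) < p.toReal - 1 := by linarith
  have hk2 : (2:ℝ) ≤ (k:ℝ) := by exact_mod_cast hk
  have hfla : ∀ r, 0 < r → HasDerivAt (fun t => t ^ a * U₁ t) 0 r := by
    intro r hr
    have h1 : HasDerivAt (fun t : ℝ => t ^ a) (a * r ^ (a - 1)) r :=
      Real.hasDerivAt_rpow_const (Or.inl hr.ne')
    have h2 := h1.mul (hU2 r hr)
    refine h2.congr_deriv ?_
    have hU2r : U₂ r = -(a * (U₁ r / r)) := by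
      have hb := (hODE r hr).2
      rw [ha]
      field_simp at hb ⊢
      linear_combination hb
    rw [hU2r]
    have hra : r ^ a = r ^ (a - 1) * r := by
      rw [Real.rpow_sub_one hr.ne']
      field_simp
    rw [hra]
    field_simp
    ring
  have hconst : ∀ r, 0 < r → r ^ a * U₁ r = U₁ 1 := by
    intro r hr
    have h := eq_of_deriv_zero hfla hr
    simpa [Real.one_rpow] using h
  refine ⟨-(U₁ 1), U 1 - -(U₁ 1) * Wfun p k 1, by linarith [(hODE 1 one_pos).1], ?_⟩
  intro r hr
  have hU1r : ∀ t, 0 < t → U₁ t = U₁ 1 * t ^ (-a) := by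
    intro t ht
    have h := hconst t ht
    have htpos : (0:ℝ) < t ^ a := Real.rpow_pos_of_pos ht a
    rw [Real.rpow_neg ht.le]
    field_simp
    linarith
  have hD : ∀ t, 0 < t → HasDerivAt (fun t => U t - -(U₁ 1) * Wfun p k t) 0 t := by
    intro t ht
    have h2 := (hasDerivAt_W hp' hpR hk ht).const_mul (-(U₁ 1))
    have h3 := (hU1 t ht).sub h2
    refine h3.congr_deriv ?_
    rw [hU1r t ht]
    ring
  have hfin := eq_of_deriv_zero hD hr
  linarith

end AuxProof

/-- Classification of cylindrical dominative p-harmonic functions. -/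
theorem stmt_5 {n k : ℕ} (hn : 2 ≤ n) (hk : 2 ≤ k) (hkn : k ≤ n)
    (p : ℝ≥0∞) (hp : 2 < p) (hp' : p ≠ ⊤)
    (Q : Matrix (Fin n) (Fin k) ℝ) (hQ : Qᵀ * Q = 1)
    (x₀ : EuclideanSpace ℝ (Fin n))
    (U : ℝ → ℝ) (hU : ContDiffOn ℝ 2 U (Set.Ioi 0))
    (u : EuclideanSpace ℝ (Fin n) → ℝ)
    (hu : ∀ x, u x = U (enorm' (Qᵀ.mulVec fun i => x i - x₀ i)))
    (hsol : ∀ x : EuclideanSpace ℝ (Fin n), (Qᵀ.mulVec fun i => x i - x₀ i) ≠ 0 →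
      DeltaOp p u x = 0 ∧ Dop p u x = 0) :
    ∃ C₁ C₂ : ℝ, 0 ≤ C₁ ∧ ∀ r : ℝ, 0 < r → U r = C₁ * Wfun p k r + C₂ := by
  have hpR : 2 < p.toReal := by
    have := (ENNReal.toReal_lt_toReal (by norm_num) hp').2 hp
    simpa using this
  have hU1 : ∀ s, 0 < s → HasDerivAt U (deriv U s) s := by
    intro s hs
    have hca : ContDiffAt ℝ 2 U s := hU.contDiffAt (isOpen_Ioi.mem_nhds hs)
    exact (hca.differentiableAt (by norm_num)).hasDerivAt
  have hsplit := (contDiffOn_succ_iff_deriv_of_isOpen (n := 1) isOpen_Ioi).1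
    (by exact_mod_cast hU)
  have hU2 : ∀ s, 0 < s → HasDerivAt (deriv U) (deriv (deriv U) s) s := by
    intro s hs
    have hd1 : ContDiffOn ℝ 1 (deriv U) (Set.Ioi 0) := hsplit.2.2
    have := (hd1.contDiffAt (isOpen_Ioi.mem_nhds hs)).differentiableAt one_ne_zero
    exact this.hasDerivAt
  have ha0 : 0 < k := by omega
  have ha1 : 1 < k := by omega
  set a0 : Fin k := ⟨0, ha0⟩
  set a1 : Fin k := ⟨1, ha1⟩
  have ha : a1 ≠ a0 := by
    intro h
    have := congrArg Fin.val h
    simp [a0, a1] at this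
  have hODE : ∀ r, 0 < r → deriv U r ≤ 0 ∧
      (p.toReal - 1) * deriv (deriv U) r + ((k:ℝ) - 1) * (deriv U r / r) = 0 := by
    intro r hr
    have hx : (Qᵀ.mulVec fun i => (xr Q x₀ a0 r) i - x₀ i) ≠ 0 := by
      have hne := yv_xr_ne Q x₀ hQ a0 hr
      contrapose! hne
      ext a
      rw [yv, Tmap_coord]
      simpa [Matrix.mulVec, dotProduct] using congrFun hne a
    obtain ⟨hDe, hDo⟩ := hsol _ hx
    rw [DeltaOp, if_neg hp'] at hDe
    rw [Dop, if_neg hp'] at hDo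
    simp only [lapl] at hDe hDo
    rw [gradient_norm Q x₀ U (deriv U) hQ a0 u hu hU1 hr,
      gradient_eval Q x₀ U (deriv U) hQ a0 u hu hU1 hr] at hDe
    exact pointwise_ODE Q x₀ U (deriv U) (deriv (deriv U)) hk hQ a0 a1 ha u hu hU1 hU2 hr
      hpR hDe hDo
  exact classify_1d hp' hpR hk hU1 hU2 hODE
end
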